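/- For every k ≥ 0 (with i ∈ {1,…,k} when k ≥ 1), the genus-0 refined floor diagram counts for degree-one classes in X_k' are: N_q^{(2),∅}(X_k',[L],0) = [2]_q/2; N_q^{(1,1),∅}(X_k',[L],0) = 1; N_q^{(1),(1)}(X_k',[L],0) = 1; N_q^{∅,(1,1)}(X_k',[L],0) = 1; N_q^{∅,(2)}(X_k',[L],0) = [2]_q; N_q^{(1),∅}(X_k',[L]−[E_i],0) = 1; N_q^{∅,(1)}(X_k',[L]−[E_i],0) = 1. (Here [L] corresponds to a = 1, all bⱼ = 0, d·[E] = 2, and [L]−[E_i] to a = 1, b_i = 1, bⱼ = 0 for j ≠ i, d·[E] = 1.) -/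

import Mathlib

open LaurentPolynomial

open scoped Classical

noncomputable section FloorDiagrams

/-- The quantum integer `[n]_q = q^{−(n−1)/2} + q^{−(n−3)/2} + ⋯ + q^{(n−1)/2}`,
as a Laurent polynomial in the variable `t = q^{1/2}` (here `T m` denotes `t^m`). -/
def qInt (n : ℕ) : LaurentPolynomial ℚ :=
  ∑ j ∈ Finset.range n, T (2 * (j : ℤ) - ((n : ℤ) - 1))

/-- A finite weighted oriented (multi)graph: `nV` vertices, `nE` edges, each edge `e`
having a source `src e`, a target `tgt e` and a positive integer weight `w e`. -/
structure WOGraph where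
  nV : ℕ
  nE : ℕ
  src : Fin nE → Fin nV
  tgt : Fin nE → Fin nV
  w : Fin nE → ℕ
  w_pos : ∀ e, 0 < w e

namespace WOGraph

variable (G : WOGraph)

/-- The edge `e` is adjacent to the vertex `v`. -/
def Adj (e : Fin G.nE) (v : Fin G.nV) : Prop :=
  G.src e = v ∨ G.tgt e = v

/-- One step of the (unoriented) adjacency relation between vertices. -/
def connStep (u v : Fin G.nV) : Prop :=
  ∃ e, (G.src e = u ∧ G.tgt e = v) ∨ (G.src e = v ∧ G.tgt e = u)

/-- The graph is connected. -/
def Connected : Prop :=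
  0 < G.nV ∧ ∀ u v, Relation.ReflTransGen G.connStep u v

/-- One step of the oriented relation between vertices. -/
def dirStep (u v : Fin G.nV) : Prop :=
  ∃ e, G.src e = u ∧ G.tgt e = v

/-- The oriented graph is acyclic: there is no non-trivial oriented cycle. -/
def Acyclic : Prop :=
  ∀ v, ¬ Relation.TransGen G.dirStep v v

/-- The number of edges adjacent to a vertex (with multiplicity). -/
def degree (v : Fin G.nV) : ℕ :=
  (Finset.univ.filter fun e => G.src e = v).card +
    (Finset.univ.filter fun e => G.tgt e = v).card

/-- A leaf is a vertex adjacent to exactly one edge. -/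
def IsLeaf (v : Fin G.nV) : Prop := G.degree v = 1

/-- `Vert^∞(G)`: leaves all of whose adjacent edges are outgoing. -/
def InfVert (v : Fin G.nV) : Prop :=
  G.IsLeaf v ∧ ∀ e, G.Adj e v → G.src e = v

/-- `Edge^∞(G)`: edges adjacent to a vertex of `Vert^∞(G)`. -/
def InfEdge (e : Fin G.nE) : Prop :=
  ∃ v, G.Adj e v ∧ G.InfVert v

/-- The divergence of a vertex: sum of weights of incoming edges minus sum of weights of
outgoing edges. -/
def div (v : Fin G.nV) : ℤ :=
  (∑ e ∈ Finset.univ.filter (fun e => G.tgt e = v), (G.w e : ℤ)) -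
    (∑ e ∈ Finset.univ.filter (fun e => G.src e = v), (G.w e : ℤ))

/-- A sink is a vertex all of whose adjacent edges are oriented toward it. -/
def IsSink (v : Fin G.nV) : Prop :=
  ∀ e, G.Adj e v → G.tgt e = v

/-- One step of the partial order on `Vert ⊔ Edge` induced by the orientation:
a vertex is below each of its outgoing edges, and each edge is below its target. -/
def veStep : (Fin G.nV ⊕ Fin G.nE) → (Fin G.nV ⊕ Fin G.nE) → Prop
  | Sum.inl u, Sum.inr e => G.src e = u
  | Sum.inr e, Sum.inl v => G.tgt e = v
  | _, _ => False

end WOGraph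

/-- `G` is a floor diagram (relative to a conic) of genus `g` and degree `a`. -/
structure IsFloorDiagram (G : WOGraph) (g a : ℕ) : Prop where
  conn : G.Connected
  acyclic : G.Acyclic
  betti : G.nE + 1 = G.nV + g
  div_floor : ∀ v, ¬ G.InfVert v → G.div v = 2 ∨ G.div v = 4
  div_inf : ∀ v, G.InfVert v → G.div v ≤ -1
  sink_of_two : ∀ v, ¬ G.InfVert v → G.div v = 2 → G.IsSink v
  total_div : (∑ v ∈ Finset.univ.filter (fun v => G.InfVert v), G.div v) = -(2 * (a : ℤ))

/-- The marking domain `A₀ ⊔ A₁ ⊔ ⋯ ⊔ A_k`, where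
`A₀ = {1, …, a − 1 + g + l(μ₁) + l(μ₂)}` and `|Aᵢ| = bᵢ`. -/
def MarkDom (k g a : ℕ) (b : Fin k → ℕ) (l1 l2 : ℕ) : Type :=
  Fin (a + g + l1 + l2 - 1) ⊕ (Σ i : Fin k, Fin (b i))

/-- `m` is a `d`-marking of type `(μ₁, μ₂)` of the floor diagram `G` of genus `g` and
degree `a`, where `d` is encoded by `a = d·[L]` and `bᵢ = d·[Eᵢ]`. -/
structure IsMarking (k g a : ℕ) (b : Fin k → ℕ) (μ₁ μ₂ : List ℕ) (G : WOGraph)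
    (m : MarkDom k g a b μ₁.length μ₂.length → Fin G.nV ⊕ Fin G.nE) : Prop where
  inj : Function.Injective m
  /-- `m` is increasing: on `A₀` (with its natural order) it is compatible with the strict
  partial order on `Vert ⊔ Edge` induced by the orientation; the elements of
  `A₁, …, A_k` are incomparable, hence impose no condition. -/
  incr : ∀ i j : Fin (a + g + μ₁.length + μ₂.length - 1),
    Relation.TransGen G.veStep (m (Sum.inl i)) (m (Sum.inl j)) → i < j
  /-- No floor of degree `1` is in the image of `m`. -/
  no_floor_one : ∀ v, ¬ G.InfVert v → G.div v = 2 → ∀ p, m p ≠ Sum.inl v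
  /-- For `v ∈ Vert^∞` with adjacent edge `e`, exactly one of `v`, `e` is in the image. -/
  inf_pair : ∀ v, G.InfVert v → ∀ e, G.Adj e v →
    Xor' (∃ p, m p = Sum.inl v) (∃ p, m p = Sum.inr e)
  /-- `m(A₁ ∪ ⋯ ∪ A_k) ⊆ Vert^∞`. -/
  exc_vert : ∀ (i : Fin k) (p : Fin (b i)),
    ∃ v, G.InfVert v ∧ m (Sum.inr ⟨i, p⟩) = Sum.inl v
  /-- `m({1, …, l(μ₁)}) = m(A₀) ∩ Vert^∞`. -/
  mu1_vert : ∀ i : Fin (a + g + μ₁.length + μ₂.length - 1),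
    (∃ v, G.InfVert v ∧ m (Sum.inl i) = Sum.inl v) ↔ (i : ℕ) < μ₁.length
  /-- Every floor is adjacent to at most one edge adjacent to a vertex of `m(Aᵢ)`. -/
  floor_once : ∀ (i : Fin k) (v : Fin G.nV), ¬ G.InfVert v →
    ∀ e e' : Fin G.nE, G.Adj e v → G.Adj e' v →
      (∃ (p : Fin (b i)) (u : Fin G.nV), m (Sum.inr ⟨i, p⟩) = Sum.inl u ∧ G.Adj e u) →
      (∃ (p : Fin (b i)) (u : Fin G.nV), m (Sum.inr ⟨i, p⟩) = Sum.inl u ∧ G.Adj e' u) →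
      e = e'
  /-- For `i ∈ {1, …, l(μ₁)}`, the edge adjacent to `m(i)` has weight `μ₁^{(i)}`. -/
  mu1_weight : ∀ (i : Fin (a + g + μ₁.length + μ₂.length - 1)) (h : (i : ℕ) < μ₁.length)
    (v : Fin G.nV) (e : Fin G.nE),
      m (Sum.inl i) = Sum.inl v → G.Adj e v → G.w e = μ₁.get ⟨(i : ℕ), h⟩
  /-- Exactly `l(μ₂)` edges of `Edge^∞` are in the image of `m|_{A₀}`, and their weights
  are the entries of `μ₂`. -/
  mu2_edges :
    ((Finset.univ.filter fun e : Fin G.nE =>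
        G.InfEdge e ∧ ∃ i : Fin (a + g + μ₁.length + μ₂.length - 1),
          m (Sum.inl i) = Sum.inr e).val.map G.w) = (μ₂ : Multiset ℕ)

/-- A `d`-marked floor diagram of genus `g` and type `(μ₁, μ₂)`, where the class `d` is
encoded by `a = d·[L]` and `bᵢ = d·[Eᵢ]`. -/
structure MarkedFD (k g a : ℕ) (b : Fin k → ℕ) (μ₁ μ₂ : List ℕ) where
  G : WOGraph
  m : MarkDom k g a b μ₁.length μ₂.length → Fin G.nV ⊕ Fin G.nE
  fd : IsFloorDiagram G g a
  marking : IsMarking k g a b μ₁ μ₂ G m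

namespace MarkedFD

variable {k g a : ℕ} {b : Fin k → ℕ} {μ₁ μ₂ : List ℕ}

/-- Equivalence of marked floor diagrams: an isomorphism of weighted oriented graphs
together with a bijection of the marking sets which is the identity on `A₀` and maps
each `Aᵢ` (`i ≥ 1`) bijectively onto itself, compatible with the markings. -/
def Equivalent (X Y : MarkedFD k g a b μ₁ μ₂) : Prop :=
  ∃ (φV : Fin X.G.nV ≃ Fin Y.G.nV) (φE : Fin X.G.nE ≃ Fin Y.G.nE)
    (ψ : MarkDom k g a b μ₁.length μ₂.length ≃ MarkDom k g a b μ₁.length μ₂.length),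
      (∀ e, Y.G.src (φE e) = φV (X.G.src e)) ∧
      (∀ e, Y.G.tgt (φE e) = φV (X.G.tgt e)) ∧
      (∀ e, Y.G.w (φE e) = X.G.w e) ∧
      (∀ i, ψ (Sum.inl i) = Sum.inl i) ∧
      (∀ (i : Fin k) (p : Fin (b i)), ∃ p' : Fin (b i),
        ψ (Sum.inr ⟨i, p⟩) = Sum.inr ⟨i, p'⟩) ∧
      (∀ p, Y.m (ψ p) = Sum.map φV φE (X.m p))

variable (X : MarkedFD k g a b μ₁ μ₂)

/-- `Edge^{μ₁}`: edges adjacent to `m({1, …, l(μ₁)})`. -/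
def EdgeMu1 : Finset (Fin X.G.nE) :=
  Finset.univ.filter fun e =>
    ∃ i : Fin (a + g + μ₁.length + μ₂.length - 1), (i : ℕ) < μ₁.length ∧
      ∃ v, X.m (Sum.inl i) = Sum.inl v ∧ X.G.Adj e v

/-- `Edge^{μ₂}`: the `l(μ₂)` edges of `Edge^∞` in the image of `m|_{A₀}`. -/
def EdgeMu2 : Finset (Fin X.G.nE) :=
  Finset.univ.filter fun e =>
    X.G.InfEdge e ∧ ∃ i : Fin (a + g + μ₁.length + μ₂.length - 1),
      X.m (Sum.inl i) = Sum.inr e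

/-- `Edge°`: edges not in `Edge^∞`. -/
def EdgeO : Finset (Fin X.G.nE) :=
  Finset.univ.filter fun e => ¬ X.G.InfEdge e

/-- The q-refined (Block–Göttsche) multiplicity of a marked floor diagram:
`∏_{e∈Edge^{μ₂}} [w(e)]_q/w(e) · ∏_{e∈Edge^{μ₁}} [w(e)]_q/w(e) · ∏_{e∈Edge^{μ₂}} w(e)
 · ∏_{e∈Edge°} [w(e)]_q²`. -/
def multq : LaurentPolynomial ℚ :=
  (∏ e ∈ X.EdgeMu2, (C ((X.G.w e : ℚ)⁻¹) * qInt (X.G.w e))) *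
    (∏ e ∈ X.EdgeMu1, (C ((X.G.w e : ℚ)⁻¹) * qInt (X.G.w e))) *
    (∏ e ∈ X.EdgeMu2, C ((X.G.w e : ℚ))) *
    (∏ e ∈ X.EdgeO, (qInt (X.G.w e)) ^ 2)

/-- The complex multiplicity of a marked floor diagram:
`∏_i μ₂^{(i)} · ∏_{e∈Edge°} w(e)²`. -/
def multC : ℚ :=
  (μ₂.map fun x => (x : ℚ)).prod * ∏ e ∈ X.EdgeO, (X.G.w e : ℚ) ^ 2

end MarkedFD

/-- `N` is the refined count `N_q^{μ₁,μ₂}(X_k', d, g)` of `d`-marked floor diagrams of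
genus `g` and type `(μ₁, μ₂)`: the sum of the q-refined multiplicities over a (finite) set
of representatives of the equivalence classes of marked floor diagrams. -/
def IsRefinedCount (k g a : ℕ) (b : Fin k → ℕ) (μ₁ μ₂ : List ℕ)
    (N : LaurentPolynomial ℚ) : Prop :=
  ∃ (ι : Type) (hι : Fintype ι) (rep : ι → MarkedFD k g a b μ₁ μ₂),
    (∀ X : MarkedFD k g a b μ₁ μ₂, ∃! i : ι, X.Equivalent (rep i)) ∧
    N = ∑ i ∈ @Finset.univ ι hι, (rep i).multq

/-- `N` is the complex count `N_ℂ^{μ₁,μ₂}(X_k', d, g)` of `d`-marked floor diagrams of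
genus `g` and type `(μ₁, μ₂)`. -/
def IsComplexCount (k g a : ℕ) (b : Fin k → ℕ) (μ₁ μ₂ : List ℕ) (N : ℚ) : Prop :=
  ∃ (ι : Type) (hι : Fintype ι) (rep : ι → MarkedFD k g a b μ₁ μ₂),
    (∀ X : MarkedFD k g a b μ₁ μ₂, ∃! i : ι, X.Equivalent (rep i)) ∧
    N = ∑ i ∈ @Finset.univ ι hι, (rep i).multC

end FloorDiagrams

section Helpers

namespace WOGraph

variable {G : WOGraph}

lemma rank_mono (r : Fin G.nV ⊕ Fin G.nE → ℕ)
    (hr : ∀ x y, G.veStep x y → r x < r y) :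
    ∀ x y, Relation.TransGen G.veStep x y → r x < r y := by
  intro x y h
  induction h with
  | single h => exact hr _ _ h
  | tail _ h ih => exact ih.trans (hr _ _ h)

lemma acyclic_of_rank (r : Fin G.nV → ℕ)
    (hr : ∀ u v, G.dirStep u v → r u < r v) : G.Acyclic := by
  have key : ∀ u v, Relation.TransGen G.dirStep u v → r u < r v := by
    intro u v h
    induction h with
    | single h => exact hr _ _ h
    | tail _ h ih => exact ih.trans (hr _ _ h)
  intro v hv
  exact lt_irrefl _ (key v v hv)

lemma sum_div_zero (G : WOGraph) : ∑ v, G.div v = 0 := by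
  unfold WOGraph.div
  rw [Finset.sum_sub_distrib]
  rw [Finset.sum_fiberwise Finset.univ G.tgt (fun e => (G.w e : ℤ)),
    Finset.sum_fiberwise Finset.univ G.src (fun e => (G.w e : ℤ))]
  ring

end WOGraph

theorem IsFloorDiagram.classify {G : WOGraph} (h : IsFloorDiagram G 0 1) :
    ∃ v0 : Fin G.nV,
      (∀ v, G.InfVert v ↔ v ≠ v0) ∧
      G.div v0 = 2 ∧
      (∀ e, G.tgt e = v0) ∧
      (∀ e, G.src e ≠ v0) ∧
      Function.Injective G.src ∧
      (∀ v, v ≠ v0 → ∃ e, G.src e = v) ∧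
      ((∃ e0 : Fin G.nE, (∀ e, e = e0) ∧ G.w e0 = 2) ∨
       (∃ e0 e1 : Fin G.nE, e0 ≠ e1 ∧ (∀ e, e = e0 ∨ e = e1) ∧ (∀ e, G.w e = 1))) := by
  classical
  have htot : ∑ v ∈ Finset.univ.filter (fun v => G.InfVert v), G.div v = -2 := by
    have := h.total_div; simpa using this
  have hsplit : ∑ v ∈ Finset.univ.filter (fun v => ¬ G.InfVert v), G.div v = 2 := by
    have h0 := G.sum_div_zero
    have hadd := Finset.sum_filter_add_sum_filter_not Finset.univ
      (fun v => G.InfVert v) G.div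
    rw [htot] at hadd; linarith
  set NI := Finset.univ.filter (fun v => ¬ G.InfVert v) with hNI
  have hlb : ∀ v ∈ NI, (2 : ℤ) ≤ G.div v := by
    intro v hv
    rcases h.div_floor v (by simpa [hNI] using hv) with h2 | h4 <;> omega
  have hcard1 : NI.card = 1 := by
    have hle : (NI.card : ℤ) * 2 ≤ 2 := by
      have := Finset.card_nsmul_le_sum NI G.div 2 hlb
      rw [hsplit] at this
      simpa [nsmul_eq_mul, mul_comm] using this
    have hne : NI.Nonempty := by
      by_contra hemp
      rw [Finset.not_nonempty_iff_eq_empty.mp hemp] at hsplit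
      simp at hsplit
    have h1 : 1 ≤ NI.card := Finset.card_pos.mpr hne
    omega
  obtain ⟨v0, hv0⟩ := Finset.card_eq_one.mp hcard1
  have hv0NI : ¬ G.InfVert v0 := by
    have : v0 ∈ NI := by rw [hv0]; exact Finset.mem_singleton_self v0
    simpa [hNI] using this
  have hInf : ∀ v, G.InfVert v ↔ v ≠ v0 := by
    intro v
    constructor
    · rintro hvi rfl; exact hv0NI hvi
    · intro hne
      by_contra hni
      have : v ∈ NI := by simp [hNI, hni]
      rw [hv0] at this
      exact hne (Finset.mem_singleton.mp this)
  have hdiv0 : G.div v0 = 2 := by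
    rw [hv0] at hsplit; simpa using hsplit
  have hsink : G.IsSink v0 := h.sink_of_two v0 hv0NI hdiv0
  have hsrc : ∀ e, G.src e ≠ v0 := by
    intro e he
    have htgt : G.tgt e = v0 := hsink e (Or.inl he)
    exact h.acyclic v0 (Relation.TransGen.single ⟨e, he, htgt⟩)
  -- structure at infinite vertices
  have hBempty : ∀ v, G.InfVert v → ∀ e, G.tgt e ≠ v := by
    intro v hv e he
    obtain ⟨hleaf, hout⟩ := hv
    have hsrce : G.src e = v := hout e (Or.inr he)
    have h1 : 1 ≤ (Finset.univ.filter fun e' => G.src e' = v).card :=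
      Finset.card_pos.mpr ⟨e, by simp [hsrce]⟩
    have h2 : 1 ≤ (Finset.univ.filter fun e' => G.tgt e' = v).card :=
      Finset.card_pos.mpr ⟨e, by simp [he]⟩
    have := hleaf
    unfold WOGraph.IsLeaf WOGraph.degree at this
    omega
  have hcardA : ∀ v, G.InfVert v →
      (Finset.univ.filter fun e => G.src e = v).card = 1 := by
    intro v hv
    have hB : (Finset.univ.filter fun e => G.tgt e = v).card = 0 := by
      rw [Finset.card_eq_zero, Finset.filter_eq_empty_iff]
      intro e _
      exact hBempty v hv e
    have := hv.1
    unfold WOGraph.IsLeaf WOGraph.degree at this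
    omega
  have htgt : ∀ e, G.tgt e = v0 := by
    intro e
    by_contra hne
    have hvi : G.InfVert (G.tgt e) := (hInf _).mpr hne
    exact hBempty _ hvi e rfl
  have hinj : Function.Injective G.src := by
    intro e e' hee
    have hv : G.InfVert (G.src e) := (hInf _).mpr (hsrc e)
    obtain ⟨a, ha⟩ := Finset.card_eq_one.mp (hcardA _ hv)
    have h1 : e ∈ Finset.univ.filter fun x => G.src x = G.src e := by simp
    have h2 : e' ∈ Finset.univ.filter fun x => G.src x = G.src e := by simp [hee]
    rw [ha] at h1 h2
    rw [Finset.mem_singleton.mp h1, Finset.mem_singleton.mp h2]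
  have hexist : ∀ v, v ≠ v0 → ∃ e, G.src e = v := by
    intro v hv
    have hvi := (hInf v).mpr hv
    have := hcardA v hvi
    obtain ⟨a, ha⟩ := Finset.card_eq_one.mp this
    refine ⟨a, ?_⟩
    have : a ∈ Finset.univ.filter fun e => G.src e = v := by
      rw [ha]; exact Finset.mem_singleton_self a
    simpa using this
  refine ⟨v0, hInf, hdiv0, htgt, hsrc, hinj, hexist, ?_⟩
  -- sum of weights is 2
  have himg : Finset.univ.filter (fun v => G.InfVert v) = Finset.univ.image G.src := by
    ext v
    simp only [Finset.mem_filter, Finset.mem_image, Finset.mem_univ, true_and]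
    constructor
    · intro hv; exact hexist v ((hInf v).mp hv)
    · rintro ⟨e, rfl⟩; exact (hInf _).mpr (hsrc e)
  have hdivsrc : ∀ e, G.div (G.src e) = -(G.w e : ℤ) := by
    intro e
    unfold WOGraph.div
    have hA : (Finset.univ.filter fun e' => G.tgt e' = G.src e) = ∅ := by
      rw [Finset.filter_eq_empty_iff]
      intro e' _
      rw [htgt e']
      exact fun hh => hsrc e hh.symm
    have hB : (Finset.univ.filter fun e' => G.src e' = G.src e) = {e} := by
      ext e'
      simp only [Finset.mem_filter, Finset.mem_univ, true_and, Finset.mem_singleton]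
      exact ⟨fun hh => hinj hh, fun hh => by rw [hh]⟩
    rw [hA, hB]
    simp
  have hsumw : ∑ e, (G.w e : ℤ) = 2 := by
    rw [himg, Finset.sum_image (fun a _ b _ hab => hinj hab)] at htot
    have : ∑ e, G.div (G.src e) = ∑ e, -(G.w e : ℤ) :=
      Finset.sum_congr rfl fun e _ => hdivsrc e
    rw [this, Finset.sum_neg_distrib] at htot
    linarith
  -- edge enumeration
  have hne : (Finset.univ : Finset (Fin G.nE)).Nonempty := by
    by_contra hemp
    rw [Finset.not_nonempty_iff_eq_empty.mp hemp] at hsumw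
    simp at hsumw
  obtain ⟨e0, _⟩ := hne
  by_cases hone : ∀ e, e = e0
  · left
    refine ⟨e0, hone, ?_⟩
    have huniv : (Finset.univ : Finset (Fin G.nE)) = {e0} := by
      ext e; simp [hone e]
    rw [huniv, Finset.sum_singleton] at hsumw
    exact_mod_cast hsumw
  · right
    push_neg at hone
    obtain ⟨e1, he1⟩ := hone
    have hw1 : ∀ e, (1 : ℤ) ≤ G.w e := fun e => by exact_mod_cast G.w_pos e
    have hex : ∀ e, e = e0 ∨ e = e1 := by
      intro e
      by_contra hc
      push_neg at hc
      obtain ⟨hc0, hc1⟩ := hc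
      have hsub : ({e0, e1, e} : Finset (Fin G.nE)) ⊆ Finset.univ := by
        intro x _; exact Finset.mem_univ x
      have hsum3 : ∑ x ∈ ({e0, e1, e} : Finset (Fin G.nE)), (G.w x : ℤ) ≤ 2 := by
        rw [← hsumw]
        exact Finset.sum_le_sum_of_subset_of_nonneg hsub
          (fun x _ _ => by positivity)
      rw [Finset.sum_insert (by
          intro hm
          rcases Finset.mem_insert.mp hm with hh | hh
          · exact he1 hh.symm
          · exact hc0 (Finset.mem_singleton.mp hh).symm),
        Finset.sum_pair (Ne.symm hc1)] at hsum3
      have := hw1 e0; have := hw1 e1; have := hw1 e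
      omega
    refine ⟨e0, e1, Ne.symm he1, hex, ?_⟩
    have huniv : (Finset.univ : Finset (Fin G.nE)) = {e0, e1} := by
      ext e
      simp only [Finset.mem_univ, Finset.mem_insert, Finset.mem_singleton, true_iff]
      exact hex e
    rw [huniv, Finset.sum_pair (Ne.symm he1)] at hsumw
    have h0 := hw1 e0; have h1 := hw1 e1
    intro e
    rcases hex e with rfl | rfl <;> omega
end Helpers
section Reps

/-- The floor diagram with one edge of weight 2. -/
def G1 : WOGraph where
  nV := 2
  nE := 1
  src := fun _ => 0
  tgt := fun _ => 1
  w := fun _ => 2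
  w_pos := fun _ => by norm_num

/-- The floor diagram with two edges of weight 1. -/
def G2 : WOGraph where
  nV := 3
  nE := 2
  src := fun e => ⟨e.val, by omega⟩
  tgt := fun _ => 2
  w := fun _ => 1
  w_pos := fun _ => by norm_num

instance : NeZero G1.nV := ⟨by decide⟩
instance : NeZero G1.nE := ⟨by decide⟩
instance : NeZero G2.nV := ⟨by decide⟩
instance : NeZero G2.nE := ⟨by decide⟩

lemma G1V_cases : ∀ v : Fin G1.nV, v = 0 ∨ v = 1 := by decide
lemma G1E_cases : ∀ e : Fin G1.nE, e = 0 := by decide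
lemma G2V_cases : ∀ v : Fin G2.nV, v = 0 ∨ v = 1 ∨ v = 2 := by decide
lemma G2E_cases : ∀ e : Fin G2.nE, e = 0 ∨ e = 1 := by decide

lemma G1_infVert : ∀ v : Fin G1.nV, G1.InfVert v ↔ v = 0 := by
  unfold WOGraph.InfVert WOGraph.IsLeaf WOGraph.degree WOGraph.Adj
  decide

lemma G2_infVert : ∀ v : Fin G2.nV, G2.InfVert v ↔ v ≠ 2 := by
  unfold WOGraph.InfVert WOGraph.IsLeaf WOGraph.degree WOGraph.Adj
  decide

lemma G1_infEdge : ∀ e : Fin G1.nE, G1.InfEdge e := by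
  intro e
  rw [G1E_cases e]
  exact ⟨0, Or.inl (by decide), (G1_infVert 0).mpr rfl⟩

lemma G2_infEdge : ∀ e : Fin G2.nE, G2.InfEdge e := by
  intro e
  rcases G2E_cases e with rfl | rfl
  · exact ⟨0, Or.inl (by decide), (G2_infVert 0).mpr (by decide)⟩
  · exact ⟨1, Or.inl (by decide), (G2_infVert 1).mpr (by decide)⟩

lemma G1_filter_inf :
    Finset.univ.filter (fun v => G1.InfVert v) = {(0 : Fin G1.nV)} := by
  ext v; simp [G1_infVert]

lemma G2_filter_inf :
    Finset.univ.filter (fun v => G2.InfVert v) = {(0 : Fin G2.nV), 1} := by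
  ext v
  simp only [Finset.mem_filter, Finset.mem_univ, true_and, G2_infVert,
    Finset.mem_insert, Finset.mem_singleton]
  revert v; decide

lemma G1_fd : IsFloorDiagram G1 0 1 := by
  refine ⟨⟨by decide, ?_⟩, ?_, rfl, ?_, ?_, ?_, ?_⟩
  · -- connected
    have h01 : G1.connStep 0 1 := ⟨0, Or.inl ⟨by decide, by decide⟩⟩
    have h10 : G1.connStep 1 0 := ⟨0, Or.inr ⟨by decide, by decide⟩⟩
    intro u v
    rcases G1V_cases u with rfl | rfl <;> rcases G1V_cases v with rfl | rfl
    · exact Relation.ReflTransGen.refl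
    · exact Relation.ReflTransGen.single h01
    · exact Relation.ReflTransGen.single h10
    · exact Relation.ReflTransGen.refl
  · -- acyclic
    refine WOGraph.acyclic_of_rank (fun v => v.val) ?_
    rintro u v ⟨e, rfl, rfl⟩
    rw [G1E_cases e]
    decide
  · intro v hv
    have hv1 : v = 1 := by
      rcases G1V_cases v with rfl | rfl
      · exact absurd ((G1_infVert 0).mpr rfl) hv
      · rfl
    subst hv1
    left
    show G1.div 1 = 2
    decide
  · intro v hv
    rw [(G1_infVert v).mp hv]
    show G1.div 0 ≤ -1
    decide
  · intro v hv _
    have hv1 : v = 1 := by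
      rcases G1V_cases v with rfl | rfl
      · exact absurd ((G1_infVert 0).mpr rfl) hv
      · rfl
    subst hv1
    intro e _
    rw [G1E_cases e]
    decide
  · rw [G1_filter_inf]
    show G1.div 0 = -(2 * (1:ℕ))
    decide

lemma G2_fd : IsFloorDiagram G2 0 1 := by
  have hni : ∀ v : Fin G2.nV, ¬ G2.InfVert v → v = 2 := by
    intro v hv
    rcases G2V_cases v with rfl | rfl | rfl
    · exact absurd ((G2_infVert 0).mpr (by decide)) hv
    · exact absurd ((G2_infVert 1).mpr (by decide)) hv
    · rfl
  refine ⟨⟨by decide, ?_⟩, ?_, rfl, ?_, ?_, ?_, ?_⟩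
  · -- connected
    have h02 : G2.connStep 0 2 := ⟨0, Or.inl ⟨by decide, by decide⟩⟩
    have h20 : G2.connStep 2 0 := ⟨0, Or.inr ⟨by decide, by decide⟩⟩
    have h12 : G2.connStep 1 2 := ⟨1, Or.inl ⟨by decide, by decide⟩⟩
    have h21 : G2.connStep 2 1 := ⟨1, Or.inr ⟨by decide, by decide⟩⟩
    intro u v
    rcases G2V_cases u with rfl | rfl | rfl <;> rcases G2V_cases v with rfl | rfl | rfl
    · exact Relation.ReflTransGen.refl
    · exact Relation.ReflTransGen.trans (.single h02) (.single h21)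
    · exact Relation.ReflTransGen.single h02
    · exact Relation.ReflTransGen.trans (.single h12) (.single h20)
    · exact Relation.ReflTransGen.refl
    · exact Relation.ReflTransGen.single h12
    · exact Relation.ReflTransGen.single h20
    · exact Relation.ReflTransGen.single h21
    · exact Relation.ReflTransGen.refl
  · -- acyclic
    refine WOGraph.acyclic_of_rank (fun v => v.val) ?_
    rintro u v ⟨e, rfl, rfl⟩
    show (G2.src e).val < (G2.tgt e).val
    have h1 : (G2.src e).val = e.val := rfl
    have h2 : (G2.tgt e).val = 2 := rfl
    have := e.isLt
    have h3 : G2.nE = 2 := rfl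
    omega
  · intro v hv
    rw [hni v hv]
    left
    show G2.div 2 = 2
    decide
  · intro v hv
    have h2 : v ≠ 2 := (G2_infVert v).mp hv
    rcases G2V_cases v with rfl | rfl | rfl
    · show G2.div 0 ≤ -1; decide
    · show G2.div 1 ≤ -1; decide
    · exact absurd rfl h2
  · intro v hv _
    rw [hni v hv]
    intro e _
    show G2.tgt e = 2
    rfl
  · rw [G2_filter_inf]
    show G2.div 0 + G2.div 1 = -(2 * (1:ℕ))
    decide

end Reps
section Helpers2

def equivOne {n : ℕ} (a : Fin n) (hx : ∀ x, x = a) : Fin n ≃ Fin 1 where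
  toFun _ := 0
  invFun _ := a
  left_inv x := (hx x).symm
  right_inv j := by omega

def equivTwo {n : ℕ} (a b : Fin n) (hab : a ≠ b) (hx : ∀ x, x = a ∨ x = b) :
    Fin n ≃ Fin 2 where
  toFun x := if x = a then 0 else 1
  invFun j := if j = 0 then a else b
  left_inv x := by
    rcases hx x with rfl | rfl
    · simp
    · simp [Ne.symm hab]
  right_inv j := by
    rcases Fin.exists_fin_two.mp ⟨j, rfl⟩ with rfl | rfl
    · simp
    · simp [Ne.symm hab]

@[simp] lemma equivTwo_a {n : ℕ} (a b : Fin n) (hab : a ≠ b) (hx) :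
    equivTwo a b hab hx a = 0 := by simp [equivTwo]

@[simp] lemma equivTwo_b {n : ℕ} (a b : Fin n) (hab : a ≠ b) (hx) :
    equivTwo a b hab hx b = 1 := by simp [equivTwo, Ne.symm hab]

def equivThree {n : ℕ} (a b c : Fin n) (hab : a ≠ b) (hac : a ≠ c) (hbc : b ≠ c)
    (hx : ∀ x, x = a ∨ x = b ∨ x = c) : Fin n ≃ Fin 3 where
  toFun x := if x = a then 0 else if x = b then 1 else 2
  invFun j := if j = 0 then a else if j = 1 then b else c
  left_inv x := by
    rcases hx x with rfl | rfl | rfl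
    · simp
    · simp [Ne.symm hab]
    · simp [Ne.symm hac, Ne.symm hbc]
  right_inv j := by
    have : j = 0 ∨ j = 1 ∨ j = 2 := by omega
    rcases this with rfl | rfl | rfl
    · simp
    · simp [Ne.symm hab]
    · simp [Ne.symm hac, Ne.symm hbc]

@[simp] lemma equivThree_a {n : ℕ} (a b c : Fin n) (hab hac hbc hx) :
    equivThree a b c hab hac hbc hx a = 0 := by simp [equivThree]

@[simp] lemma equivThree_b {n : ℕ} (a b c : Fin n) (hab hac hbc hx) :
    equivThree a b c hab hac hbc hx b = 1 := by simp [equivThree, Ne.symm hab]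

@[simp] lemma equivThree_c {n : ℕ} (a b c : Fin n) (hab hac hbc hx) :
    equivThree a b c hab hac hbc hx c = 2 := by
  simp [equivThree, Ne.symm hac, Ne.symm hbc]

lemma pair_exh {α : Sort*} {e0 e1 a b : α} (h : ∀ x, x = e0 ∨ x = e1) (hab : a ≠ b) :
    ∀ x, x = a ∨ x = b := by
  intro x
  rcases h x with hx | hx
  · rcases h a with ha | ha
    · exact Or.inl (hx.trans ha.symm)
    · rcases h b with hb | hb
      · exact Or.inr (hx.trans hb.symm)
      · exact absurd (ha.trans hb.symm) hab
  · rcases h a with ha | ha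
    · rcases h b with hb | hb
      · exact absurd (ha.trans hb.symm) hab
      · exact Or.inr (hx.trans hb.symm)
    · exact Or.inl (hx.trans ha.symm)

lemma dom_no_exc {k n : ℕ} (p : Fin n ⊕ (Σ i : Fin k, Fin 0)) :
    ∃ i : Fin n, p = Sum.inl i := by
  rcases p with i | ⟨i, q⟩
  · exact ⟨i, rfl⟩
  · exact q.elim0

lemma dom_exc {k n : ℕ} (i : Fin k)
    (p : Fin n ⊕ (Σ j : Fin k, Fin (if j = i then 1 else 0))) :
    (∃ i0 : Fin n, p = Sum.inl i0) ∨ p = Sum.inr ⟨i, ⟨0, by simp⟩⟩ := by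
  rcases p with i0 | ⟨j, q⟩
  · exact Or.inl ⟨i0, rfl⟩
  · right
    by_cases hj : j = i
    · subst hj
      have hq0 : q = ⟨0, by simp⟩ := by
        apply Fin.ext
        have hq := q.isLt
        simp only [if_pos rfl] at hq
        simpa using Nat.lt_one_iff.mp hq
      rw [hq0]
    · have h0 : (if j = i then 1 else 0) = 0 := by simp [hj]
      exact ((Fin.cast h0) q).elim0

/-- rank function for `G1`. -/
def r1 : Fin G1.nV ⊕ Fin G1.nE → ℕ :=
  Sum.elim (fun v => 2 * v.val) (fun e => 2 * e.val + 1)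

/-- rank function for `G2`. -/
def r2 : Fin G2.nV ⊕ Fin G2.nE → ℕ :=
  Sum.elim (fun v => 2 * v.val) (fun e => 2 * e.val + 1)

lemma G1_rank : ∀ x y, G1.veStep x y → r1 x < r1 y := by
  rintro (u | e) (v | f) h
  · exact h.elim
  · have h' : G1.src f = u := h
    subst h'
    rw [G1E_cases f]
    decide
  · have h' : G1.tgt e = v := h
    subst h'
    rw [G1E_cases e]
    decide
  · exact h.elim

lemma G2_rank : ∀ x y, G2.veStep x y → r2 x < r2 y := by
  rintro (u | e) (v | f) h
  · exact h.elim
  · have h' : G2.src f = u := h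
    subst h'
    rcases G2E_cases f with rfl | rfl <;> decide
  · have h' : G2.tgt e = v := h
    subst h'
    rcases G2E_cases e with rfl | rfl <;> decide
  · exact h.elim

lemma mark_vert_of_lt {k g a : ℕ} {b : Fin k → ℕ} {μ₁ μ₂ : List ℕ}
    (X : MarkedFD k g a b μ₁ μ₂) (i : Fin (a + g + μ₁.length + μ₂.length - 1))
    (hi : (i : ℕ) < μ₁.length) :
    ∃ v, X.G.InfVert v ∧ X.m (Sum.inl i) = Sum.inl v :=
  (X.marking.mu1_vert i).mpr hi

lemma mark_edge_of_ge {k g a : ℕ} {b : Fin k → ℕ} {μ₁ μ₂ : List ℕ}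
    (X : MarkedFD k g a b μ₁ μ₂) {v0 : Fin X.G.nV}
    (hInf : ∀ v, X.G.InfVert v ↔ v ≠ v0) (hdiv0 : X.G.div v0 = 2)
    (i : Fin (a + g + μ₁.length + μ₂.length - 1)) (hi : ¬ (i : ℕ) < μ₁.length) :
    ∃ e, X.m (Sum.inl i) = Sum.inr e := by
  rcases hm : X.m (Sum.inl i) with v | e
  · by_cases hv : v = v0
    · exfalso
      exact X.marking.no_floor_one v0 (by simp [hInf v0]) hdiv0 (Sum.inl i)
        (hm.trans (by rw [hv]))
    · exact absurd ((X.marking.mu1_vert i).mp ⟨v, (hInf v).mpr hv, hm⟩) hi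
  · exact ⟨e, rfl⟩

end Helpers2
section RepsA

lemma G1_adj : ∀ (e : Fin G1.nE) (v : Fin G1.nV), G1.Adj e v := by
  unfold WOGraph.Adj; decide

/-- marking for case 1 : `μ₁ = [2]`, `μ₂ = []`. -/
def mk1 (k : ℕ) : MarkDom k 0 1 (fun _ => 0) 1 0 → Fin G1.nV ⊕ Fin G1.nE :=
  fun _ => Sum.inl 0

/-- marking for case 5 : `μ₁ = []`, `μ₂ = [2]`. -/
def mk5 (k : ℕ) : MarkDom k 0 1 (fun _ => 0) 0 1 → Fin G1.nV ⊕ Fin G1.nE :=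
  fun _ => Sum.inr 0

def rep1 (k : ℕ) : MarkedFD k 0 1 (fun _ => 0) [2] [] where
  G := G1
  m := mk1 k
  fd := G1_fd
  marking := by
    constructor
    · -- inj
      intro p q _
      obtain ⟨i, rfl⟩ := dom_no_exc p
      obtain ⟨j, rfl⟩ := dom_no_exc q
      have hi := i.isLt; have hj := j.isLt
      simp only [List.length_cons, List.length_nil] at hi hj
      congr 1
      apply Fin.ext
      omega
    · -- incr
      intro i j h
      have := WOGraph.rank_mono r1 G1_rank _ _ h
      simp [mk1, r1] at this
    · -- no_floor_one
      intro v hv _ p hp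
      have hv1 : v = 1 := by
        rcases G1V_cases v with rfl | rfl
        · exact absurd ((G1_infVert 0).mpr rfl) hv
        · rfl
      subst hv1
      simp only [mk1] at hp
      exact absurd (Sum.inl.inj hp) (by decide)
    · -- inf_pair
      intro v hv e _
      have hv0 : v = 0 := (G1_infVert v).mp hv
      subst hv0
      left
      constructor
      · exact ⟨Sum.inl ⟨0, by simp⟩, rfl⟩
      · rintro ⟨p, hp⟩
        simp [mk1] at hp
    · -- exc_vert
      intro i p
      exact Fin.elim0 p
    · -- mu1_vert
      intro i
      constructor
      · intro _
        have := i.isLt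
        simpa using this
      · intro _
        exact ⟨0, (G1_infVert 0).mpr rfl, rfl⟩
    · -- floor_once
      rintro i v _ e e' _ _ ⟨p, _⟩
      exact Fin.elim0 p
    · -- mu1_weight
      rintro ⟨iv, hiv⟩ h v e _ _
      have h' : iv < 1 := by simpa using h
      have : iv = 0 := by omega
      subst this
      rw [G1E_cases e]
      rfl
    · -- mu2_edges
      have hf : (Finset.univ.filter fun e : Fin G1.nE =>
          G1.InfEdge e ∧ ∃ i : Fin (1 + 0 + ([2] : List ℕ).length + ([] : List ℕ).length - 1),
            mk1 k (Sum.inl i) = Sum.inr e) = ∅ := by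
        rw [Finset.filter_eq_empty_iff]
        rintro e _ ⟨_, i, hi⟩
        simp [mk1] at hi
      rw [hf]
      rfl

def rep5 (k : ℕ) : MarkedFD k 0 1 (fun _ => 0) [] [2] where
  G := G1
  m := mk5 k
  fd := G1_fd
  marking := by
    constructor
    · -- inj
      intro p q _
      obtain ⟨i, rfl⟩ := dom_no_exc p
      obtain ⟨j, rfl⟩ := dom_no_exc q
      have hi := i.isLt; have hj := j.isLt
      simp only [List.length_cons, List.length_nil] at hi hj
      congr 1
      apply Fin.ext
      omega
    · -- incr
      intro i j h
      have := WOGraph.rank_mono r1 G1_rank _ _ h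
      simp [mk5, r1] at this
    · -- no_floor_one
      intro v hv _ p hp
      simp [mk5] at hp
    · -- inf_pair
      intro v hv e he
      have hv0 : v = 0 := (G1_infVert v).mp hv
      subst hv0
      right
      constructor
      · exact ⟨Sum.inl ⟨0, by simp⟩, by rw [G1E_cases e]; rfl⟩
      · rintro ⟨p, hp⟩
        simp [mk5] at hp
    · -- exc_vert
      intro i p
      exact Fin.elim0 p
    · -- mu1_vert
      intro i
      constructor
      · rintro ⟨v, _, hv⟩
        simp [mk5] at hv
      · intro h
        simp at h
    · -- floor_once
      rintro i v _ e e' _ _ ⟨p, _⟩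
      exact Fin.elim0 p
    · -- mu1_weight
      rintro ⟨iv, hiv⟩ h v e _ _
      simp at h
    · -- mu2_edges
      have hf : (Finset.univ.filter fun e : Fin G1.nE =>
          G1.InfEdge e ∧ ∃ i : Fin (1 + 0 + ([] : List ℕ).length + ([2] : List ℕ).length - 1),
            mk5 k (Sum.inl i) = Sum.inr e) = {0} := by
        ext e
        simp only [Finset.mem_filter, Finset.mem_univ, true_and, Finset.mem_singleton]
        rw [G1E_cases e]
        constructor
        · intro _; rfl
        · intro _
          exact ⟨G1_infEdge 0, ⟨⟨0, by simp⟩, rfl⟩⟩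
      rw [hf]
      rfl

end RepsA
section RepsB

lemma G2_adj0 : ∀ e, G2.Adj e (0 : Fin G2.nV) ↔ e = 0 := by
  unfold WOGraph.Adj; decide

lemma G2_adj1 : ∀ e, G2.Adj e (1 : Fin G2.nV) ↔ e = 1 := by
  unfold WOGraph.Adj; decide

lemma G2_inf0 : G2.InfVert 0 := (G2_infVert 0).mpr (by decide)
lemma G2_inf1 : G2.InfVert 1 := (G2_infVert 1).mpr (by decide)

lemma G2_ni : ∀ v : Fin G2.nV, ¬ G2.InfVert v → v = 2 := by
  intro v hv
  rcases G2V_cases v with rfl | rfl | rfl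
  · exact absurd G2_inf0 hv
  · exact absurd G2_inf1 hv
  · rfl

lemma hG2V : G2.nV = 3 := rfl
lemma hG2E : G2.nE = 2 := rfl

lemma r2_v0 : r2 (Sum.inl 0) = 0 := rfl
lemma r2_v1 : r2 (Sum.inl 1) = 2 := rfl
lemma r2_e0 : r2 (Sum.inr 0) = 1 := rfl
lemma r2_e1 : r2 (Sum.inr 1) = 3 := rfl

def mk2 (k : ℕ) : MarkDom k 0 1 (fun _ => 0) 2 0 → Fin G2.nV ⊕ Fin G2.nE :=
  fun p => match p with
  | .inl i => Sum.inl ⟨i.val, by have := i.isLt; have := hG2V; omega⟩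
  | .inr _ => Sum.inl 0

def mk3 (k : ℕ) : MarkDom k 0 1 (fun _ => 0) 1 1 → Fin G2.nV ⊕ Fin G2.nE :=
  fun p => match p with
  | .inl i => if i.val = 0 then Sum.inl 0 else Sum.inr 1
  | .inr _ => Sum.inl 0

def mk4 (k : ℕ) : MarkDom k 0 1 (fun _ => 0) 0 2 → Fin G2.nV ⊕ Fin G2.nE :=
  fun p => match p with
  | .inl i => Sum.inr ⟨i.val, by have := i.isLt; have := hG2E; omega⟩
  | .inr _ => Sum.inl 0

def mk6 (k : ℕ) (i : Fin k) :
    MarkDom k 0 1 (fun j => if j = i then 1 else 0) 1 0 → Fin G2.nV ⊕ Fin G2.nE :=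
  fun p => match p with
  | .inl _ => Sum.inl 0
  | .inr _ => Sum.inl 1

def mk7 (k : ℕ) (i : Fin k) :
    MarkDom k 0 1 (fun j => if j = i then 1 else 0) 0 1 → Fin G2.nV ⊕ Fin G2.nE :=
  fun p => match p with
  | .inl _ => Sum.inr 0
  | .inr _ => Sum.inl 1

def rep2 (k : ℕ) : MarkedFD k 0 1 (fun _ => 0) [1, 1] [] where
  G := G2
  m := mk2 k
  fd := G2_fd
  marking := by
    constructor
    · -- inj
      intro p q h
      obtain ⟨i, rfl⟩ := dom_no_exc p
      obtain ⟨j, rfl⟩ := dom_no_exc q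
      simp only [mk2, Sum.inl.injEq, Fin.mk.injEq] at h
      congr 1
      exact Fin.ext h
    · -- incr
      intro i j h
      have hr := WOGraph.rank_mono r2 G2_rank _ _ h
      simp only [mk2, r2, Sum.elim_inl] at hr
      exact Fin.lt_def.mpr (by omega)
    · -- no_floor_one
      intro v hv _ p hp
      have hv2 := G2_ni v hv
      subst hv2
      obtain ⟨i, rfl⟩ := dom_no_exc p
      simp only [mk2, Sum.inl.injEq] at hp
      have h2 := congrArg Fin.val hp
      have := i.isLt
      simp only [List.length_cons, List.length_nil] at this
      simp only [Fin.val_mk] at h2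
      have h3 : ((2 : Fin G2.nV) : ℕ) = 2 := rfl
      omega
    · -- inf_pair
      intro v hv e he
      have hv2 : v = 0 ∨ v = 1 := by
        rcases G2V_cases v with rfl | rfl | rfl
        · exact Or.inl rfl
        · exact Or.inr rfl
        · exact absurd hv (by rw [G2_infVert]; simp)
      left
      constructor
      · rcases hv2 with rfl | rfl
        · exact ⟨Sum.inl ⟨0, by simp⟩, rfl⟩
        · exact ⟨Sum.inl ⟨1, by simp⟩, rfl⟩
      · rintro ⟨p, hp⟩
        obtain ⟨i, rfl⟩ := dom_no_exc p
        simp [mk2] at hp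
    · -- exc_vert
      intro i p
      exact Fin.elim0 p
    · -- mu1_vert
      intro i
      have hi := i.isLt
      simp only [List.length_cons, List.length_nil] at hi
      constructor
      · intro _
        simpa using hi
      · intro _
        refine ⟨⟨i.val, by have := hG2V; omega⟩, ?_, rfl⟩
        rw [G2_infVert]
        intro hc
        have h2 := congrArg Fin.val hc
        simp only [Fin.val_mk] at h2
        have h3 : ((2 : Fin G2.nV) : ℕ) = 2 := rfl
        omega
    · -- floor_once
      rintro i v _ e e' _ _ ⟨p, _⟩
      exact Fin.elim0 p
    · -- mu1_weight
      rintro ⟨iv, hiv⟩ h v e _ _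
      simp only [List.length_cons, List.length_nil] at h
      have : iv = 0 ∨ iv = 1 := by omega
      rcases this with rfl | rfl <;> rfl
    · -- mu2_edges
      have hf : (Finset.univ.filter fun e : Fin G2.nE =>
          G2.InfEdge e ∧ ∃ i : Fin (1 + 0 + ([1, 1] : List ℕ).length +
            ([] : List ℕ).length - 1), mk2 k (Sum.inl i) = Sum.inr e) = ∅ := by
        rw [Finset.filter_eq_empty_iff]
        rintro e _ ⟨_, i, hi⟩
        simp [mk2] at hi
      rw [hf]
      rfl

def rep3 (k : ℕ) : MarkedFD k 0 1 (fun _ => 0) [1] [1] where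
  G := G2
  m := mk3 k
  fd := G2_fd
  marking := by
    constructor
    · -- inj
      intro p q h
      obtain ⟨i, rfl⟩ := dom_no_exc p
      obtain ⟨j, rfl⟩ := dom_no_exc q
      have hi := i.isLt; have hj := j.isLt
      simp only [List.length_cons, List.length_nil] at hi hj
      by_cases h1 : i.val = 0 <;> by_cases h2 : j.val = 0 <;>
          simp only [mk3, h1, h2, reduceIte] at h
      · congr 1; apply Fin.ext; omega
      · exact absurd h (by simp)
      · exact absurd h (by simp)
      · congr 1; apply Fin.ext; omega
    · -- incr
      intro i j h
      have hr := WOGraph.rank_mono r2 G2_rank _ _ h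
      have hi := i.isLt; have hj := j.isLt
      simp only [List.length_cons, List.length_nil] at hi hj
      by_cases h1 : i.val = 0 <;> by_cases h2 : j.val = 0 <;>
          simp only [mk3, h1, h2, reduceIte] at hr
      · rw [r2_v0] at hr; omega
      · exact Fin.lt_def.mpr (by omega)
      · rw [r2_e1, r2_v0] at hr; omega
      · rw [r2_e1] at hr; omega
    · -- no_floor_one
      intro v hv _ p hp
      have hv2 := G2_ni v hv
      subst hv2
      obtain ⟨i, rfl⟩ := dom_no_exc p
      by_cases h1 : i.val = 0 <;> simp only [mk3, h1, reduceIte] at hp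
      · exact absurd (Sum.inl.inj hp) (by decide)
      · exact Sum.inr_ne_inl hp
    · -- inf_pair
      intro v hv e he
      have hv2 : v = 0 ∨ v = 1 := by
        rcases G2V_cases v with rfl | rfl | rfl
        · exact Or.inl rfl
        · exact Or.inr rfl
        · exact absurd hv (by rw [G2_infVert]; simp)
      rcases hv2 with rfl | rfl
      · left
        constructor
        · exact ⟨Sum.inl ⟨0, by simp⟩, rfl⟩
        · rintro ⟨p, hp⟩
          obtain ⟨i, rfl⟩ := dom_no_exc p
          have he0 : e = 0 := (G2_adj0 e).mp he
          subst he0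
          by_cases h1 : i.val = 0 <;> simp only [mk3, h1, reduceIte] at hp
          · exact Sum.inl_ne_inr hp
          · exact absurd (Sum.inr.inj hp) (by decide)
      · right
        constructor
        · have he1 : e = 1 := (G2_adj1 e).mp he
          subst he1
          exact ⟨Sum.inl ⟨1, by simp⟩, rfl⟩
        · rintro ⟨p, hp⟩
          obtain ⟨i, rfl⟩ := dom_no_exc p
          by_cases h1 : i.val = 0 <;> simp only [mk3, h1, reduceIte] at hp
          · exact absurd (Sum.inl.inj hp) (by decide)
          · exact Sum.inr_ne_inl hp
    · -- exc_vert
      intro i p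
      exact Fin.elim0 p
    · -- mu1_vert
      intro i
      have hi := i.isLt
      simp only [List.length_cons, List.length_nil] at hi
      by_cases h1 : i.val = 0
      · constructor
        · intro _
          simpa using h1.le
        · intro _
          exact ⟨0, G2_inf0, by simp only [mk3, h1, reduceIte]⟩
      · constructor
        · rintro ⟨v, _, hv⟩
          simp only [mk3, h1, reduceIte] at hv
          exact (Sum.inr_ne_inl hv).elim
        · intro hc
          simp only [List.length_cons, List.length_nil] at hc
          omega
    · -- floor_once
      rintro i v _ e e' _ _ ⟨p, _⟩
      exact Fin.elim0 p
    · -- mu1_weight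
      rintro ⟨iv, hiv⟩ h v e hm hadj
      simp only [List.length_cons, List.length_nil] at h
      have : iv = 0 := by omega
      subst this
      rfl
    · -- mu2_edges
      have hf : (Finset.univ.filter fun e : Fin G2.nE =>
          G2.InfEdge e ∧ ∃ i : Fin (1 + 0 + ([1] : List ℕ).length +
            ([1] : List ℕ).length - 1), mk3 k (Sum.inl i) = Sum.inr e) = {1} := by
        ext e
        simp only [Finset.mem_filter, Finset.mem_univ, true_and, Finset.mem_singleton]
        constructor
        · rintro ⟨_, i, hi⟩
          by_cases h1 : i.val = 0 <;> simp only [mk3, h1, reduceIte] at hi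
          · exact (Sum.inl_ne_inr hi).elim
          · exact (Sum.inr.inj hi).symm
        · rintro rfl
          exact ⟨G2_infEdge 1, ⟨⟨1, by simp⟩, by simp [mk3]⟩⟩
      rw [hf]
      rfl

def rep4 (k : ℕ) : MarkedFD k 0 1 (fun _ => 0) [] [1, 1] where
  G := G2
  m := mk4 k
  fd := G2_fd
  marking := by
    constructor
    · -- inj
      intro p q h
      obtain ⟨i, rfl⟩ := dom_no_exc p
      obtain ⟨j, rfl⟩ := dom_no_exc q
      simp only [mk4, Sum.inr.injEq, Fin.mk.injEq] at h
      congr 1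
      exact Fin.ext h
    · -- incr
      intro i j h
      have hr := WOGraph.rank_mono r2 G2_rank _ _ h
      simp only [mk4, r2, Sum.elim_inr] at hr
      exact Fin.lt_def.mpr (by omega)
    · -- no_floor_one
      intro v hv _ p hp
      obtain ⟨i, rfl⟩ := dom_no_exc p
      simp only [mk4] at hp
      exact Sum.inr_ne_inl hp
    · -- inf_pair
      intro v hv e he
      have hv2 : v = 0 ∨ v = 1 := by
        rcases G2V_cases v with rfl | rfl | rfl
        · exact Or.inl rfl
        · exact Or.inr rfl
        · exact absurd hv (by rw [G2_infVert]; simp)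
      right
      constructor
      · rcases hv2 with rfl | rfl
        · have he0 : e = 0 := (G2_adj0 e).mp he
          subst he0
          exact ⟨Sum.inl ⟨0, by simp⟩, rfl⟩
        · have he1 : e = 1 := (G2_adj1 e).mp he
          subst he1
          exact ⟨Sum.inl ⟨1, by simp⟩, rfl⟩
      · rintro ⟨p, hp⟩
        obtain ⟨i, rfl⟩ := dom_no_exc p
        simp only [mk4] at hp
        exact Sum.inr_ne_inl hp
    · -- exc_vert
      intro i p
      exact Fin.elim0 p
    · -- mu1_vert
      intro i
      constructor
      · rintro ⟨v, _, hv⟩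
        simp only [mk4] at hv
        exact (Sum.inr_ne_inl hv).elim
      · intro hc
        simp only [List.length_nil] at hc
        omega
    · -- floor_once
      rintro i v _ e e' _ _ ⟨p, _⟩
      exact Fin.elim0 p
    · -- mu1_weight
      rintro ⟨iv, hiv⟩ h v e hm hadj
      simp only [List.length_nil] at h
      omega
    · -- mu2_edges
      have hf : (Finset.univ.filter fun e : Fin G2.nE =>
          G2.InfEdge e ∧ ∃ i : Fin (1 + 0 + ([] : List ℕ).length +
            ([1, 1] : List ℕ).length - 1), mk4 k (Sum.inl i) = Sum.inr e) =
          ({0, 1} : Finset (Fin G2.nE)) := by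
        ext e
        simp only [Finset.mem_filter, Finset.mem_univ, true_and, Finset.mem_insert,
          Finset.mem_singleton]
        constructor
        · intro _
          rcases G2E_cases e with rfl | rfl
          · exact Or.inl rfl
          · exact Or.inr rfl
        · intro _
          refine ⟨G2_infEdge e, ?_⟩
          rcases G2E_cases e with rfl | rfl
          · exact ⟨⟨0, by simp⟩, rfl⟩
          · exact ⟨⟨1, by simp⟩, rfl⟩
      rw [hf]
      rfl

def rep6 (k : ℕ) (i : Fin k) :
    MarkedFD k 0 1 (fun j => if j = i then 1 else 0) [1] [] where
  G := G2
  m := mk6 k i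
  fd := G2_fd
  marking := by
    constructor
    · -- inj
      intro p q h
      rcases dom_exc i p with ⟨i0, rfl⟩ | rfl <;> rcases dom_exc i q with ⟨j0, rfl⟩ | rfl
      · have hi := i0.isLt; have hj := j0.isLt
        simp only [List.length_cons, List.length_nil] at hi hj
        congr 1
        apply Fin.ext
        omega
      · exact absurd (Sum.inl.inj h) (by decide)
      · exact absurd (Sum.inl.inj h) (by decide)
      · rfl
    · -- incr
      intro i0 j0 h
      have hr := WOGraph.rank_mono r2 G2_rank _ _ h
      simp only [mk6] at hr
      rw [r2_v0] at hr
      omega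
    · -- no_floor_one
      intro v hv _ p hp
      have hv2 := G2_ni v hv
      subst hv2
      rcases dom_exc i p with ⟨i0, rfl⟩ | rfl <;>
        exact absurd (Sum.inl.inj hp) (by decide)
    · -- inf_pair
      intro v hv e he
      have hv2 : v = 0 ∨ v = 1 := by
        rcases G2V_cases v with rfl | rfl | rfl
        · exact Or.inl rfl
        · exact Or.inr rfl
        · exact absurd hv (by rw [G2_infVert]; simp)
      left
      constructor
      · rcases hv2 with rfl | rfl
        · exact ⟨Sum.inl ⟨0, by simp⟩, rfl⟩
        · exact ⟨Sum.inr ⟨i, ⟨0, by simp⟩⟩, rfl⟩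
      · rintro ⟨p, hp⟩
        rcases dom_exc i p with ⟨i0, rfl⟩ | rfl <;> exact Sum.inl_ne_inr hp
    · -- exc_vert
      intro j p
      exact ⟨1, G2_inf1, rfl⟩
    · -- mu1_vert
      intro i0
      constructor
      · intro _
        have := i0.isLt
        simpa using this
      · intro _
        exact ⟨0, G2_inf0, rfl⟩
    · -- floor_once
      rintro j v _ e e' hadj hadj' ⟨p, u, hm, hu⟩ ⟨p', u', hm', hu'⟩
      have hu1 : (1 : Fin G2.nV) = u := Sum.inl.inj hm
      have hu1' : (1 : Fin G2.nV) = u' := Sum.inl.inj hm'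
      subst hu1; subst hu1'
      rw [(G2_adj1 e).mp hu, (G2_adj1 e').mp hu']
    · -- mu1_weight
      rintro ⟨iv, hiv⟩ h v e _ _
      simp only [List.length_cons, List.length_nil] at h
      have : iv = 0 := by omega
      subst this
      rfl
    · -- mu2_edges
      have hf : (Finset.univ.filter fun e : Fin G2.nE =>
          G2.InfEdge e ∧ ∃ i0 : Fin (1 + 0 + ([1] : List ℕ).length +
            ([] : List ℕ).length - 1), mk6 k i (Sum.inl i0) = Sum.inr e) = ∅ := by
        rw [Finset.filter_eq_empty_iff]
        rintro e _ ⟨_, i0, hi⟩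
        exact Sum.inl_ne_inr hi
      rw [hf]
      rfl

def rep7 (k : ℕ) (i : Fin k) :
    MarkedFD k 0 1 (fun j => if j = i then 1 else 0) [] [1] where
  G := G2
  m := mk7 k i
  fd := G2_fd
  marking := by
    constructor
    · -- inj
      intro p q h
      rcases dom_exc i p with ⟨i0, rfl⟩ | rfl <;> rcases dom_exc i q with ⟨j0, rfl⟩ | rfl
      · have hi := i0.isLt; have hj := j0.isLt
        simp only [List.length_cons, List.length_nil] at hi hj
        congr 1
        apply Fin.ext
        omega
      · exact (Sum.inr_ne_inl h).elim
      · exact (Sum.inl_ne_inr h).elim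
      · rfl
    · -- incr
      intro i0 j0 h
      have hr := WOGraph.rank_mono r2 G2_rank _ _ h
      simp only [mk7] at hr
      rw [r2_e0] at hr
      omega
    · -- no_floor_one
      intro v hv _ p hp
      have hv2 := G2_ni v hv
      subst hv2
      rcases dom_exc i p with ⟨i0, rfl⟩ | rfl
      · exact Sum.inr_ne_inl hp
      · exact absurd (Sum.inl.inj hp) (by decide)
    · -- inf_pair
      intro v hv e he
      have hv2 : v = 0 ∨ v = 1 := by
        rcases G2V_cases v with rfl | rfl | rfl
        · exact Or.inl rfl
        · exact Or.inr rfl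
        · exact absurd hv (by rw [G2_infVert]; simp)
      rcases hv2 with rfl | rfl
      · right
        constructor
        · have he0 : e = 0 := (G2_adj0 e).mp he
          subst he0
          exact ⟨Sum.inl ⟨0, by simp⟩, rfl⟩
        · rintro ⟨p, hp⟩
          rcases dom_exc i p with ⟨i0, rfl⟩ | rfl
          · exact Sum.inr_ne_inl hp
          · exact absurd (Sum.inl.inj hp) (by decide)
      · left
        constructor
        · exact ⟨Sum.inr ⟨i, ⟨0, by simp⟩⟩, rfl⟩
        · rintro ⟨p, hp⟩
          have he1 : e = 1 := (G2_adj1 e).mp he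
          subst he1
          rcases dom_exc i p with ⟨i0, rfl⟩ | rfl
          · exact absurd (Sum.inr.inj hp) (by decide)
          · exact Sum.inl_ne_inr hp
    · -- exc_vert
      intro j p
      exact ⟨1, G2_inf1, rfl⟩
    · -- mu1_vert
      intro i0
      constructor
      · rintro ⟨v, _, hv⟩
        exact (Sum.inr_ne_inl hv).elim
      · intro hc
        simp only [List.length_nil] at hc
        omega
    · -- floor_once
      rintro j v _ e e' hadj hadj' ⟨p, u, hm, hu⟩ ⟨p', u', hm', hu'⟩
      have hu1 : (1 : Fin G2.nV) = u := Sum.inl.inj hm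
      have hu1' : (1 : Fin G2.nV) = u' := Sum.inl.inj hm'
      subst hu1; subst hu1'
      rw [(G2_adj1 e).mp hu, (G2_adj1 e').mp hu']
    · -- mu1_weight
      rintro ⟨iv, hiv⟩ h v e _ _
      simp only [List.length_nil] at h
      omega
    · -- mu2_edges
      have hf : (Finset.univ.filter fun e : Fin G2.nE =>
          G2.InfEdge e ∧ ∃ i0 : Fin (1 + 0 + ([] : List ℕ).length +
            ([1] : List ℕ).length - 1), mk7 k i (Sum.inl i0) = Sum.inr e) = {0} := by
        ext e
        simp only [Finset.mem_filter, Finset.mem_univ, true_and, Finset.mem_singleton]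
        constructor
        · rintro ⟨_, i0, hi⟩
          exact (Sum.inr.inj hi).symm
        · rintro rfl
          exact ⟨G2_infEdge 0, ⟨⟨0, by simp⟩, rfl⟩⟩
      rw [hf]
      rfl

end RepsB
section EqA

lemma equiv1 (k : ℕ) (X : MarkedFD k 0 1 (fun _ => 0) [2] []) :
    X.Equivalent (rep1 k) := by
  obtain ⟨v0, hInf, hdiv0, htgt, hsrc, hinj, hex, hedges⟩ := X.fd.classify
  rcases hedges with ⟨e0, hall, hw2⟩ | ⟨e0, e1, hne, hex2, hw1⟩
  · -- one edge of weight 2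
    have hvex : ∀ v, v = X.G.src e0 ∨ v = v0 := by
      intro v
      by_cases hv : v = v0
      · exact Or.inr hv
      · left
        obtain ⟨e, he⟩ := hex v hv
        rw [← he, hall e]
    refine ⟨equivTwo (X.G.src e0) v0 (hsrc e0) hvex, equivOne e0 hall, Equiv.refl _,
      ?_, ?_, ?_, fun i => rfl, fun j p => ⟨p, rfl⟩, ?_⟩
    · intro e
      rw [hall e]
      exact (equivTwo_a _ _ _ _).symm
    · intro e
      rw [hall e, htgt e0]
      exact (equivTwo_b _ _ _ _).symm
    · intro e
      rw [hall e, hw2]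
      rfl
    · intro p
      obtain ⟨i, rfl⟩ := dom_no_exc p
      obtain ⟨xi, hxiinf, hxi⟩ := mark_vert_of_lt X i (by have := i.isLt; simpa using this)
      obtain ⟨e, he⟩ := hex xi ((hInf xi).mp hxiinf)
      have hxie : xi = X.G.src e0 := he.symm.trans (congrArg X.G.src (hall e))
      rw [hxi, hxie]
      simp only [Equiv.refl_apply, Sum.map_inl]
      exact congrArg Sum.inl (equivTwo_a (X.G.src e0) v0 (hsrc e0) hvex).symm
  · -- two edges of weight 1 : impossible, the marked edge must have weight 2
    exfalso
    obtain ⟨x0, hx0inf, hx0⟩ :=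
      mark_vert_of_lt X ⟨0, by simp⟩ (by simp)
    obtain ⟨ea, hea⟩ := hex x0 ((hInf x0).mp hx0inf)
    have hwea : X.G.w ea = 2 :=
      X.marking.mu1_weight ⟨0, by simp⟩ (by simp) x0 ea hx0 (Or.inl hea)
    rw [hw1 ea] at hwea
    exact absurd hwea (by decide)

lemma equiv5 (k : ℕ) (X : MarkedFD k 0 1 (fun _ => 0) [] [2]) :
    X.Equivalent (rep5 k) := by
  obtain ⟨v0, hInf, hdiv0, htgt, hsrc, hinj, hex, hedges⟩ := X.fd.classify
  rcases hedges with ⟨e0, hall, hw2⟩ | ⟨e0, e1, hne, hex2, hw1⟩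
  · -- one edge of weight 2
    have hvex : ∀ v, v = X.G.src e0 ∨ v = v0 := by
      intro v
      by_cases hv : v = v0
      · exact Or.inr hv
      · left
        obtain ⟨e, he⟩ := hex v hv
        rw [← he, hall e]
    refine ⟨equivTwo (X.G.src e0) v0 (hsrc e0) hvex, equivOne e0 hall, Equiv.refl _,
      ?_, ?_, ?_, fun i => rfl, fun j p => ⟨p, rfl⟩, ?_⟩
    · intro e
      rw [hall e]
      exact (equivTwo_a _ _ _ _).symm
    · intro e
      rw [hall e, htgt e0]
      exact (equivTwo_b _ _ _ _).symm
    · intro e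
      rw [hall e, hw2]
      rfl
    · intro p
      obtain ⟨i, rfl⟩ := dom_no_exc p
      obtain ⟨ei, hei⟩ := mark_edge_of_ge X hInf hdiv0 i (by simp)
      rw [hei]
      rfl
  · -- two edges : impossible, only one marked point
    exfalso
    have hu01 : X.G.src e0 ≠ X.G.src e1 := fun hc => hne (hinj hc)
    have hXor0 := X.marking.inf_pair (X.G.src e0) ((hInf _).mpr (hsrc e0)) e0 (Or.inl rfl)
    have hXor1 := X.marking.inf_pair (X.G.src e1) ((hInf _).mpr (hsrc e1)) e1 (Or.inl rfl)
    have hm0 : (∃ p, X.m p = Sum.inl (X.G.src e0)) ∨ (∃ p, X.m p = Sum.inr e0) := by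
      rcases hXor0 with ⟨h, _⟩ | ⟨h, _⟩
      · exact Or.inl h
      · exact Or.inr h
    have hm1 : (∃ p, X.m p = Sum.inl (X.G.src e1)) ∨ (∃ p, X.m p = Sum.inr e1) := by
      rcases hXor1 with ⟨h, _⟩ | ⟨h, _⟩
      · exact Or.inl h
      · exact Or.inr h
    have key : ∀ (p q : MarkDom k 0 1 (fun _ => 0) ([] : List ℕ).length
        ([2] : List ℕ).length), X.m p = X.m q := by
      intro p q
      obtain ⟨i, rfl⟩ := dom_no_exc p
      obtain ⟨j, rfl⟩ := dom_no_exc q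
      have : i = j := by
        apply Fin.ext
        have hi := i.isLt; have hj := j.isLt
        simp only [List.length_nil, List.length_cons] at hi hj
        omega
      rw [this]
    rcases hm0 with ⟨p0, hp0⟩ | ⟨p0, hp0⟩ <;> rcases hm1 with ⟨p1, hp1⟩ | ⟨p1, hp1⟩ <;>
        have hkey := (key p0 p1).symm.trans hp0 <;> rw [hp1] at hkey
    · exact hu01 (Sum.inl.inj hkey).symm
    · exact Sum.inr_ne_inl hkey
    · exact Sum.inl_ne_inr hkey
    · exact hne (hinj (congrArg X.G.src ((Sum.inr.inj hkey)))).symm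

lemma multq1 (k : ℕ) : (rep1 k).multq = C (2⁻¹ : ℚ) * qInt 2 := by
  have hMu2 : (rep1 k).EdgeMu2 = (∅ : Finset (Fin G1.nE)) := by
    erw [MarkedFD.EdgeMu2, Finset.filter_eq_empty_iff]
    rintro e _ ⟨_, i, hi⟩
    exact Sum.inl_ne_inr hi
  have hMu1 : (rep1 k).EdgeMu1 = ({0} : Finset (Fin G1.nE)) := by
    rw [MarkedFD.EdgeMu1]
    ext e
    simp only [Finset.mem_filter, Finset.mem_univ, true_and, Finset.mem_singleton]
    constructor
    · intro _
      exact Finset.mem_singleton.mpr (G1E_cases e)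
    · intro he; obtain rfl := Finset.mem_singleton.mp he
      exact ⟨⟨0, by simp⟩, by simp, (0 : Fin G1.nV), rfl, G1_adj _ _⟩
  have hO : (rep1 k).EdgeO = (∅ : Finset (Fin G1.nE)) := by
    erw [MarkedFD.EdgeO, Finset.filter_eq_empty_iff]
    intro e _
    simp only [not_not]
    exact G1_infEdge e
  rw [MarkedFD.multq, hMu2, hMu1, hO]
  erw [Finset.prod_empty, Finset.prod_singleton]
  have hw : (rep1 k).G.w (0 : Fin G1.nE) = 2 := rfl
  rw [hw]
  norm_num

lemma multq5 (k : ℕ) : (rep5 k).multq = qInt 2 := by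
  have hMu2 : (rep5 k).EdgeMu2 = ({0} : Finset (Fin G1.nE)) := by
    rw [MarkedFD.EdgeMu2]
    ext e
    simp only [Finset.mem_filter, Finset.mem_univ, true_and, Finset.mem_singleton]
    constructor
    · intro _
      exact Finset.mem_singleton.mpr (G1E_cases e)
    · intro he; obtain rfl := Finset.mem_singleton.mp he
      exact ⟨G1_infEdge 0, ⟨0, by simp⟩, rfl⟩
  have hMu1 : (rep5 k).EdgeMu1 = (∅ : Finset (Fin G1.nE)) := by
    erw [MarkedFD.EdgeMu1, Finset.filter_eq_empty_iff]
    rintro e _ ⟨i, hlt, _⟩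
    simp at hlt
  have hO : (rep5 k).EdgeO = (∅ : Finset (Fin G1.nE)) := by
    erw [MarkedFD.EdgeO, Finset.filter_eq_empty_iff]
    intro e _
    simp only [not_not]
    exact G1_infEdge e
  rw [MarkedFD.multq, hMu2, hMu1, hO]
  erw [Finset.prod_empty, Finset.prod_singleton, Finset.prod_singleton]
  have hw : (rep5 k).G.w (0 : Fin G1.nE) = 2 := rfl
  rw [hw]
  rw [mul_one, mul_one, mul_comm (C (((2:ℕ):ℚ))⁻¹) (qInt 2), mul_assoc, ← map_mul]
  have h1 : (((2:ℕ):ℚ))⁻¹ * ((2:ℕ):ℚ) = 1 := by norm_num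
  rw [h1, map_one, mul_one]

lemma count1 (k : ℕ) :
    IsRefinedCount k 0 1 (fun _ => 0) [2] [] (C (2⁻¹ : ℚ) * qInt 2) := by
  refine ⟨PUnit, inferInstance, fun _ => rep1 k,
    fun X => ⟨PUnit.unit, equiv1 k X, fun u _ => rfl⟩, ?_⟩
  rw [show (Finset.univ : Finset PUnit) = {PUnit.unit} from rfl,
    Finset.sum_singleton, multq1]

lemma count5 (k : ℕ) :
    IsRefinedCount k 0 1 (fun _ => 0) [] [2] (qInt 2) := by
  refine ⟨PUnit, inferInstance, fun _ => rep5 k,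
    fun X => ⟨PUnit.unit, equiv5 k X, fun u _ => rfl⟩, ?_⟩
  rw [show (Finset.univ : Finset PUnit) = {PUnit.unit} from rfl,
    Finset.sum_singleton, multq5]

end EqA
section EqB

lemma qInt_one : qInt 1 = 1 := by
  simp [qInt]

/-- Builds the graph part of an equivalence with `rep` based on `G2`. -/
lemma equiv3_graph : True := trivial

lemma equiv2 (k : ℕ) (X : MarkedFD k 0 1 (fun _ => 0) [1, 1] []) :
    X.Equivalent (rep2 k) := by
  obtain ⟨v0, hInf, hdiv0, htgt, hsrc, hinj, hex, hedges⟩ := X.fd.classify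
  have i0 : Fin (1 + 0 + ([1,1] : List ℕ).length + ([] : List ℕ).length - 1) := ⟨0, by simp⟩
  rcases hedges with ⟨e0, hall, hw2⟩ | ⟨e0, e1, hne, hex2, hw1⟩
  · -- one edge of weight 2 : impossible
    exfalso
    obtain ⟨x0, hx0inf, hx0⟩ := mark_vert_of_lt X ⟨0, by simp⟩ (by simp)
    obtain ⟨ea, hea⟩ := hex x0 ((hInf x0).mp hx0inf)
    have hwea : X.G.w ea = 1 :=
      X.marking.mu1_weight ⟨0, by simp⟩ (by simp) x0 ea hx0 (Or.inl hea)
    rw [hall ea, hw2] at hwea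
    exact absurd hwea (by decide)
  · -- two edges of weight 1
    obtain ⟨x0, hx0inf, hx0⟩ := mark_vert_of_lt X
      (⟨0, by simp⟩ : Fin (1 + 0 + ([1,1] : List ℕ).length + ([] : List ℕ).length - 1))
      (by simp)
    obtain ⟨x1, hx1inf, hx1⟩ := mark_vert_of_lt X
      (⟨1, by simp⟩ : Fin (1 + 0 + ([1,1] : List ℕ).length + ([] : List ℕ).length - 1))
      (by simp)
    have hx01 : x0 ≠ x1 := by
      intro hc
      have h1 := X.marking.inj (hx0.trans (by rw [hc, ← hx1]; exact rfl))
      have h2 := congrArg (fun p => match p with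
        | Sum.inl i => (i : ℕ)
        | Sum.inr _ => 0) h1
      simp at h2
    obtain ⟨ea, hea⟩ := hex x0 ((hInf x0).mp hx0inf)
    obtain ⟨eb, heb⟩ := hex x1 ((hInf x1).mp hx1inf)
    have hneab : ea ≠ eb := by
      intro hc
      exact hx01 (hea.symm.trans (by rw [hc, heb]))
    have hee : ∀ e, e = ea ∨ e = eb := pair_exh hex2 hneab
    have hu01 : X.G.src ea ≠ X.G.src eb := fun hc => hneab (hinj hc)
    have hvex : ∀ v, v = X.G.src ea ∨ v = X.G.src eb ∨ v = v0 := by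
      intro v
      by_cases hv : v = v0
      · exact Or.inr (Or.inr hv)
      · obtain ⟨e, he⟩ := hex v hv
        rcases hee e with rfl | rfl
        · exact Or.inl he.symm
        · exact Or.inr (Or.inl he.symm)
    refine ⟨equivThree (X.G.src ea) (X.G.src eb) v0 hu01 (hsrc ea) (hsrc eb) hvex,
      equivTwo ea eb hneab hee, Equiv.refl _, ?_, ?_, ?_, fun i => rfl,
      fun j p => ⟨p, rfl⟩, ?_⟩
    · intro e
      rcases hee e with rfl | rfl
      · exact (congrArg G2.src (equivTwo_a _ _ _ _)).trans
          (equivThree_a _ _ _ _ _ _ _).symm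
      · exact (congrArg G2.src (equivTwo_b _ _ _ _)).trans
          (equivThree_b _ _ _ _ _ _ _).symm
    · intro e
      rw [htgt e]
      exact (equivThree_c _ _ _ _ _ _ _).symm
    · intro e
      rw [hw1 e]
      rfl
    · intro p
      obtain ⟨j, rfl⟩ := dom_no_exc p
      have hj : j = (⟨0, by simp⟩ : Fin (1 + 0 + ([1,1] : List ℕ).length +
            ([] : List ℕ).length - 1)) ∨
          j = (⟨1, by simp⟩ : Fin (1 + 0 + ([1,1] : List ℕ).length +
            ([] : List ℕ).length - 1)) := by
        have h := j.isLt
        simp only [List.length_cons, List.length_nil] at h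
        rcases (show (j : ℕ) = 0 ∨ (j : ℕ) = 1 by omega) with h0 | h0
        · exact Or.inl (Fin.ext h0)
        · exact Or.inr (Fin.ext h0)
      rcases hj with rfl | rfl
      · rw [hx0]
        simp only [Equiv.refl_apply, Sum.map_inl]
        rw [show x0 = X.G.src ea from hea.symm]
        exact congrArg Sum.inl (equivThree_a _ _ _ _ _ _ _).symm
      · rw [hx1]
        simp only [Equiv.refl_apply, Sum.map_inl]
        rw [show x1 = X.G.src eb from heb.symm]
        exact congrArg Sum.inl (equivThree_b _ _ _ _ _ _ _).symm

lemma equiv3 (k : ℕ) (X : MarkedFD k 0 1 (fun _ => 0) [1] [1]) :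
    X.Equivalent (rep3 k) := by
  obtain ⟨v0, hInf, hdiv0, htgt, hsrc, hinj, hex, hedges⟩ := X.fd.classify
  rcases hedges with ⟨e0, hall, hw2⟩ | ⟨e0, e1, hne, hex2, hw1⟩
  · -- one edge of weight 2 : impossible
    exfalso
    obtain ⟨x0, hx0inf, hx0⟩ := mark_vert_of_lt X ⟨0, by simp⟩ (by simp)
    obtain ⟨ea, hea⟩ := hex x0 ((hInf x0).mp hx0inf)
    have hwea : X.G.w ea = 1 :=
      X.marking.mu1_weight ⟨0, by simp⟩ (by simp) x0 ea hx0 (Or.inl hea)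
    rw [hall ea, hw2] at hwea
    exact absurd hwea (by decide)
  · -- two edges of weight 1
    obtain ⟨x0, hx0inf, hx0⟩ := mark_vert_of_lt X
      (⟨0, by simp⟩ : Fin (1 + 0 + ([1] : List ℕ).length + ([1] : List ℕ).length - 1))
      (by simp)
    obtain ⟨b1, hb1⟩ := mark_edge_of_ge X hInf hdiv0
      (⟨1, by simp⟩ : Fin (1 + 0 + ([1] : List ℕ).length + ([1] : List ℕ).length - 1))
      (by simp)
    obtain ⟨ea, hea⟩ := hex x0 ((hInf x0).mp hx0inf)
    have hneab : ea ≠ b1 := by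
      rcases X.marking.inf_pair x0 hx0inf ea (Or.inl hea) with ⟨_, hnr⟩ | ⟨_, hnl⟩
      · intro hc
        exact hnr ⟨Sum.inl ⟨1, by simp⟩, by rw [hb1, hc]⟩
      · exact absurd ⟨Sum.inl ⟨0, by simp⟩, hx0⟩ hnl
    have hee : ∀ e, e = ea ∨ e = b1 := pair_exh hex2 hneab
    have hu01 : X.G.src ea ≠ X.G.src b1 := fun hc => hneab (hinj hc)
    have hvex : ∀ v, v = X.G.src ea ∨ v = X.G.src b1 ∨ v = v0 := by
      intro v
      by_cases hv : v = v0
      · exact Or.inr (Or.inr hv)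
      · obtain ⟨e, he⟩ := hex v hv
        rcases hee e with rfl | rfl
        · exact Or.inl he.symm
        · exact Or.inr (Or.inl he.symm)
    refine ⟨equivThree (X.G.src ea) (X.G.src b1) v0 hu01 (hsrc ea) (hsrc b1) hvex,
      equivTwo ea b1 hneab hee, Equiv.refl _, ?_, ?_, ?_, fun i => rfl,
      fun j p => ⟨p, rfl⟩, ?_⟩
    · intro e
      rcases hee e with rfl | rfl
      · exact (congrArg G2.src (equivTwo_a _ _ _ _)).trans
          (equivThree_a _ _ _ _ _ _ _).symm
      · exact (congrArg G2.src (equivTwo_b _ _ _ _)).trans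
          (equivThree_b _ _ _ _ _ _ _).symm
    · intro e
      rw [htgt e]
      exact (equivThree_c _ _ _ _ _ _ _).symm
    · intro e
      rw [hw1 e]
      rfl
    · intro p
      obtain ⟨j, rfl⟩ := dom_no_exc p
      have hj : j = (⟨0, by simp⟩ : Fin (1 + 0 + ([1] : List ℕ).length +
            ([1] : List ℕ).length - 1)) ∨
          j = (⟨1, by simp⟩ : Fin (1 + 0 + ([1] : List ℕ).length +
            ([1] : List ℕ).length - 1)) := by
        have h := j.isLt
        simp only [List.length_cons, List.length_nil] at h
        rcases (show (j : ℕ) = 0 ∨ (j : ℕ) = 1 by omega) with h0 | h0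
        · exact Or.inl (Fin.ext h0)
        · exact Or.inr (Fin.ext h0)
      rcases hj with rfl | rfl
      · rw [hx0]
        simp only [Equiv.refl_apply, Sum.map_inl]
        rw [show x0 = X.G.src ea from hea.symm]
        exact congrArg Sum.inl (equivThree_a _ _ _ _ _ _ _).symm
      · rw [hb1]
        simp only [Equiv.refl_apply, Sum.map_inr]
        exact congrArg Sum.inr (equivTwo_b _ _ _ _).symm

lemma equiv4 (k : ℕ) (X : MarkedFD k 0 1 (fun _ => 0) [] [1, 1]) :
    X.Equivalent (rep4 k) := by
  obtain ⟨v0, hInf, hdiv0, htgt, hsrc, hinj, hex, hedges⟩ := X.fd.classify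
  obtain ⟨b0, hb0⟩ := mark_edge_of_ge X hInf hdiv0
    (⟨0, by simp⟩ : Fin (1 + 0 + ([] : List ℕ).length + ([1,1] : List ℕ).length - 1))
    (by simp)
  obtain ⟨b1, hb1⟩ := mark_edge_of_ge X hInf hdiv0
    (⟨1, by simp⟩ : Fin (1 + 0 + ([] : List ℕ).length + ([1,1] : List ℕ).length - 1))
    (by simp)
  have hneab : b0 ≠ b1 := by
    intro hc
    have h1 := X.marking.inj (hb0.trans (by rw [hc, ← hb1]; exact rfl))
    have h2 := congrArg (fun p => match p with
      | Sum.inl i => (i : ℕ)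
      | Sum.inr _ => 0) h1
    simp at h2
  rcases hedges with ⟨e0, hall, hw2⟩ | ⟨e0, e1, hne, hex2, hw1⟩
  · exact absurd ((hall b0).trans (hall b1).symm) hneab
  · have hee : ∀ e, e = b0 ∨ e = b1 := pair_exh hex2 hneab
    have hu01 : X.G.src b0 ≠ X.G.src b1 := fun hc => hneab (hinj hc)
    have hvex : ∀ v, v = X.G.src b0 ∨ v = X.G.src b1 ∨ v = v0 := by
      intro v
      by_cases hv : v = v0
      · exact Or.inr (Or.inr hv)
      · obtain ⟨e, he⟩ := hex v hv
        rcases hee e with rfl | rfl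
        · exact Or.inl he.symm
        · exact Or.inr (Or.inl he.symm)
    refine ⟨equivThree (X.G.src b0) (X.G.src b1) v0 hu01 (hsrc b0) (hsrc b1) hvex,
      equivTwo b0 b1 hneab hee, Equiv.refl _, ?_, ?_, ?_, fun i => rfl,
      fun j p => ⟨p, rfl⟩, ?_⟩
    · intro e
      rcases hee e with rfl | rfl
      · exact (congrArg G2.src (equivTwo_a _ _ _ _)).trans
          (equivThree_a _ _ _ _ _ _ _).symm
      · exact (congrArg G2.src (equivTwo_b _ _ _ _)).trans
          (equivThree_b _ _ _ _ _ _ _).symm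
    · intro e
      rw [htgt e]
      exact (equivThree_c _ _ _ _ _ _ _).symm
    · intro e
      rw [hw1 e]
      rfl
    · intro p
      obtain ⟨j, rfl⟩ := dom_no_exc p
      have hj : j = (⟨0, by simp⟩ : Fin (1 + 0 + ([] : List ℕ).length +
            ([1,1] : List ℕ).length - 1)) ∨
          j = (⟨1, by simp⟩ : Fin (1 + 0 + ([] : List ℕ).length +
            ([1,1] : List ℕ).length - 1)) := by
        have h := j.isLt
        simp only [List.length_cons, List.length_nil] at h
        rcases (show (j : ℕ) = 0 ∨ (j : ℕ) = 1 by omega) with h0 | h0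
        · exact Or.inl (Fin.ext h0)
        · exact Or.inr (Fin.ext h0)
      rcases hj with rfl | rfl
      · rw [hb0]
        simp only [Equiv.refl_apply, Sum.map_inr]
        exact congrArg Sum.inr (equivTwo_a _ _ _ _).symm
      · rw [hb1]
        simp only [Equiv.refl_apply, Sum.map_inr]
        exact congrArg Sum.inr (equivTwo_b _ _ _ _).symm

lemma equiv6 (k : ℕ) (i : Fin k)
    (X : MarkedFD k 0 1 (fun j => if j = i then 1 else 0) [1] []) :
    X.Equivalent (rep6 k i) := by
  obtain ⟨v0, hInf, hdiv0, htgt, hsrc, hinj, hex, hedges⟩ := X.fd.classify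
  obtain ⟨x0, hx0inf, hx0⟩ := mark_vert_of_lt X
    (⟨0, by simp⟩ : Fin (1 + 0 + ([1] : List ℕ).length + ([] : List ℕ).length - 1))
    (by simp)
  obtain ⟨x1, hx1inf, hx1⟩ := X.marking.exc_vert i ⟨0, by simp⟩
  have hx01 : x0 ≠ x1 := by
    intro hc
    have h1 := X.marking.inj (hx0.trans (by rw [hc, ← hx1]; exact rfl))
    exact Sum.inl_ne_inr h1
  obtain ⟨ea, hea⟩ := hex x0 ((hInf x0).mp hx0inf)
  obtain ⟨eb, heb⟩ := hex x1 ((hInf x1).mp hx1inf)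
  have hneab : ea ≠ eb := by
    intro hc
    exact hx01 (hea.symm.trans (by rw [hc, heb]))
  rcases hedges with ⟨e0, hall, hw2⟩ | ⟨e0, e1, hne, hex2, hw1⟩
  · exact absurd ((hall ea).trans (hall eb).symm) hneab
  · have hee : ∀ e, e = ea ∨ e = eb := pair_exh hex2 hneab
    have hu01 : X.G.src ea ≠ X.G.src eb := fun hc => hneab (hinj hc)
    have hvex : ∀ v, v = X.G.src ea ∨ v = X.G.src eb ∨ v = v0 := by
      intro v
      by_cases hv : v = v0
      · exact Or.inr (Or.inr hv)
      · obtain ⟨e, he⟩ := hex v hv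
        rcases hee e with rfl | rfl
        · exact Or.inl he.symm
        · exact Or.inr (Or.inl he.symm)
    refine ⟨equivThree (X.G.src ea) (X.G.src eb) v0 hu01 (hsrc ea) (hsrc eb) hvex,
      equivTwo ea eb hneab hee, Equiv.refl _, ?_, ?_, ?_, fun i => rfl,
      fun j p => ⟨p, rfl⟩, ?_⟩
    · intro e
      rcases hee e with rfl | rfl
      · exact (congrArg G2.src (equivTwo_a _ _ _ _)).trans
          (equivThree_a _ _ _ _ _ _ _).symm
      · exact (congrArg G2.src (equivTwo_b _ _ _ _)).trans
          (equivThree_b _ _ _ _ _ _ _).symm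
    · intro e
      rw [htgt e]
      exact (equivThree_c _ _ _ _ _ _ _).symm
    · intro e
      rw [hw1 e]
      rfl
    · intro p
      rcases dom_exc i p with ⟨j, rfl⟩ | rfl
      · have hj : j = (⟨0, by simp⟩ : Fin (1 + 0 + ([1] : List ℕ).length +
            ([] : List ℕ).length - 1)) := by
          apply Fin.ext
          have h := j.isLt
          simp only [List.length_cons, List.length_nil] at h
          show (j : ℕ) = 0
          omega
        rw [hj, hx0]
        simp only [Equiv.refl_apply, Sum.map_inl]
        rw [show x0 = X.G.src ea from hea.symm]
        exact congrArg Sum.inl (equivThree_a _ _ _ _ _ _ _).symm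
      · rw [hx1]
        simp only [Equiv.refl_apply, Sum.map_inl]
        rw [show x1 = X.G.src eb from heb.symm]
        exact congrArg Sum.inl (equivThree_b _ _ _ _ _ _ _).symm

lemma equiv7 (k : ℕ) (i : Fin k)
    (X : MarkedFD k 0 1 (fun j => if j = i then 1 else 0) [] [1]) :
    X.Equivalent (rep7 k i) := by
  obtain ⟨v0, hInf, hdiv0, htgt, hsrc, hinj, hex, hedges⟩ := X.fd.classify
  obtain ⟨b0, hb0⟩ := mark_edge_of_ge X hInf hdiv0
    (⟨0, by simp⟩ : Fin (1 + 0 + ([] : List ℕ).length + ([1] : List ℕ).length - 1))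
    (by simp)
  obtain ⟨x1, hx1inf, hx1⟩ := X.marking.exc_vert i ⟨0, by simp⟩
  obtain ⟨eb, heb⟩ := hex x1 ((hInf x1).mp hx1inf)
  have hneab : b0 ≠ eb := by
    rcases X.marking.inf_pair x1 hx1inf eb (Or.inl heb) with ⟨_, hnr⟩ | ⟨_, hnl⟩
    · intro hc
      exact hnr ⟨Sum.inl ⟨0, by simp⟩, by rw [hb0, hc]⟩
    · exact absurd ⟨Sum.inr ⟨i, ⟨0, by simp⟩⟩, hx1⟩ hnl
  rcases hedges with ⟨e0, hall, hw2⟩ | ⟨e0, e1, hne, hex2, hw1⟩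
  · exact absurd ((hall b0).trans (hall eb).symm) hneab
  · have hee : ∀ e, e = b0 ∨ e = eb := pair_exh hex2 hneab
    have hu01 : X.G.src b0 ≠ X.G.src eb := fun hc => hneab (hinj hc)
    have hvex : ∀ v, v = X.G.src b0 ∨ v = X.G.src eb ∨ v = v0 := by
      intro v
      by_cases hv : v = v0
      · exact Or.inr (Or.inr hv)
      · obtain ⟨e, he⟩ := hex v hv
        rcases hee e with rfl | rfl
        · exact Or.inl he.symm
        · exact Or.inr (Or.inl he.symm)
    refine ⟨equivThree (X.G.src b0) (X.G.src eb) v0 hu01 (hsrc b0) (hsrc eb) hvex,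
      equivTwo b0 eb hneab hee, Equiv.refl _, ?_, ?_, ?_, fun i => rfl,
      fun j p => ⟨p, rfl⟩, ?_⟩
    · intro e
      rcases hee e with rfl | rfl
      · exact (congrArg G2.src (equivTwo_a _ _ _ _)).trans
          (equivThree_a _ _ _ _ _ _ _).symm
      · exact (congrArg G2.src (equivTwo_b _ _ _ _)).trans
          (equivThree_b _ _ _ _ _ _ _).symm
    · intro e
      rw [htgt e]
      exact (equivThree_c _ _ _ _ _ _ _).symm
    · intro e
      rw [hw1 e]
      rfl
    · intro p
      rcases dom_exc i p with ⟨j, rfl⟩ | rfl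
      · have hj : j = (⟨0, by simp⟩ : Fin (1 + 0 + ([] : List ℕ).length +
            ([1] : List ℕ).length - 1)) := by
          apply Fin.ext
          have h := j.isLt
          simp only [List.length_cons, List.length_nil] at h
          show (j : ℕ) = 0
          omega
        rw [hj, hb0]
        simp only [Equiv.refl_apply, Sum.map_inr]
        exact congrArg Sum.inr (equivTwo_a _ _ _ _).symm
      · rw [hx1]
        simp only [Equiv.refl_apply, Sum.map_inl]
        rw [show x1 = X.G.src eb from heb.symm]
        exact congrArg Sum.inl (equivThree_b _ _ _ _ _ _ _).symm

end EqB
section EqC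

lemma multq2 (k : ℕ) : (rep2 k).multq = 1 := by
  have h2 : ∀ (s : Finset (Fin (rep2 k).G.nE)),
      (∏ e ∈ s, (C (((rep2 k).G.w e : ℚ)⁻¹) * qInt ((rep2 k).G.w e))) = 1 :=
    fun s => Finset.prod_eq_one (fun e _ => by
      rw [show (rep2 k).G.w e = 1 from rfl]
      simp [qInt_one])
  have h3 : ∀ (s : Finset (Fin (rep2 k).G.nE)),
      (∏ e ∈ s, C (((rep2 k).G.w e : ℚ))) = 1 :=
    fun s => Finset.prod_eq_one (fun e _ => by
      rw [show (rep2 k).G.w e = 1 from rfl]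
      simp)
  have h4 : ∀ (s : Finset (Fin (rep2 k).G.nE)),
      (∏ e ∈ s, (qInt ((rep2 k).G.w e)) ^ 2) = 1 :=
    fun s => Finset.prod_eq_one (fun e _ => by
      rw [show (rep2 k).G.w e = 1 from rfl]
      simp [qInt_one])
  rw [MarkedFD.multq, h2, h2, h3, h4]
  norm_num

lemma multq3 (k : ℕ) : (rep3 k).multq = 1 := by
  have h2 : ∀ (s : Finset (Fin (rep3 k).G.nE)),
      (∏ e ∈ s, (C (((rep3 k).G.w e : ℚ)⁻¹) * qInt ((rep3 k).G.w e))) = 1 :=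
    fun s => Finset.prod_eq_one (fun e _ => by
      rw [show (rep3 k).G.w e = 1 from rfl]
      simp [qInt_one])
  have h3 : ∀ (s : Finset (Fin (rep3 k).G.nE)),
      (∏ e ∈ s, C (((rep3 k).G.w e : ℚ))) = 1 :=
    fun s => Finset.prod_eq_one (fun e _ => by
      rw [show (rep3 k).G.w e = 1 from rfl]
      simp)
  have h4 : ∀ (s : Finset (Fin (rep3 k).G.nE)),
      (∏ e ∈ s, (qInt ((rep3 k).G.w e)) ^ 2) = 1 :=
    fun s => Finset.prod_eq_one (fun e _ => by
      rw [show (rep3 k).G.w e = 1 from rfl]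
      simp [qInt_one])
  rw [MarkedFD.multq, h2, h2, h3, h4]
  norm_num

lemma multq4 (k : ℕ) : (rep4 k).multq = 1 := by
  have h2 : ∀ (s : Finset (Fin (rep4 k).G.nE)),
      (∏ e ∈ s, (C (((rep4 k).G.w e : ℚ)⁻¹) * qInt ((rep4 k).G.w e))) = 1 :=
    fun s => Finset.prod_eq_one (fun e _ => by
      rw [show (rep4 k).G.w e = 1 from rfl]
      simp [qInt_one])
  have h3 : ∀ (s : Finset (Fin (rep4 k).G.nE)),
      (∏ e ∈ s, C (((rep4 k).G.w e : ℚ))) = 1 :=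
    fun s => Finset.prod_eq_one (fun e _ => by
      rw [show (rep4 k).G.w e = 1 from rfl]
      simp)
  have h4 : ∀ (s : Finset (Fin (rep4 k).G.nE)),
      (∏ e ∈ s, (qInt ((rep4 k).G.w e)) ^ 2) = 1 :=
    fun s => Finset.prod_eq_one (fun e _ => by
      rw [show (rep4 k).G.w e = 1 from rfl]
      simp [qInt_one])
  rw [MarkedFD.multq, h2, h2, h3, h4]
  norm_num

lemma multq6 (k : ℕ) (i : Fin k) : (rep6 k i).multq = 1 := by
  have h2 : ∀ (s : Finset (Fin (rep6 k i).G.nE)),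
      (∏ e ∈ s, (C (((rep6 k i).G.w e : ℚ)⁻¹) * qInt ((rep6 k i).G.w e))) = 1 :=
    fun s => Finset.prod_eq_one (fun e _ => by
      rw [show (rep6 k i).G.w e = 1 from rfl]
      simp [qInt_one])
  have h3 : ∀ (s : Finset (Fin (rep6 k i).G.nE)),
      (∏ e ∈ s, C (((rep6 k i).G.w e : ℚ))) = 1 :=
    fun s => Finset.prod_eq_one (fun e _ => by
      rw [show (rep6 k i).G.w e = 1 from rfl]
      simp)
  have h4 : ∀ (s : Finset (Fin (rep6 k i).G.nE)),
      (∏ e ∈ s, (qInt ((rep6 k i).G.w e)) ^ 2) = 1 :=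
    fun s => Finset.prod_eq_one (fun e _ => by
      rw [show (rep6 k i).G.w e = 1 from rfl]
      simp [qInt_one])
  rw [MarkedFD.multq, h2, h2, h3, h4]
  norm_num

lemma multq7 (k : ℕ) (i : Fin k) : (rep7 k i).multq = 1 := by
  have h2 : ∀ (s : Finset (Fin (rep7 k i).G.nE)),
      (∏ e ∈ s, (C (((rep7 k i).G.w e : ℚ)⁻¹) * qInt ((rep7 k i).G.w e))) = 1 :=
    fun s => Finset.prod_eq_one (fun e _ => by
      rw [show (rep7 k i).G.w e = 1 from rfl]
      simp [qInt_one])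
  have h3 : ∀ (s : Finset (Fin (rep7 k i).G.nE)),
      (∏ e ∈ s, C (((rep7 k i).G.w e : ℚ))) = 1 :=
    fun s => Finset.prod_eq_one (fun e _ => by
      rw [show (rep7 k i).G.w e = 1 from rfl]
      simp)
  have h4 : ∀ (s : Finset (Fin (rep7 k i).G.nE)),
      (∏ e ∈ s, (qInt ((rep7 k i).G.w e)) ^ 2) = 1 :=
    fun s => Finset.prod_eq_one (fun e _ => by
      rw [show (rep7 k i).G.w e = 1 from rfl]
      simp [qInt_one])
  rw [MarkedFD.multq, h2, h2, h3, h4]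
  norm_num

lemma count2 (k : ℕ) : IsRefinedCount k 0 1 (fun _ => 0) [1, 1] [] 1 := by
  refine ⟨PUnit, inferInstance, fun _ => rep2 k,
    fun X => ⟨PUnit.unit, equiv2 k X, fun u _ => rfl⟩, ?_⟩
  rw [show (Finset.univ : Finset PUnit) = {PUnit.unit} from rfl,
    Finset.sum_singleton, multq2]

lemma count3 (k : ℕ) : IsRefinedCount k 0 1 (fun _ => 0) [1] [1] 1 := by
  refine ⟨PUnit, inferInstance, fun _ => rep3 k,
    fun X => ⟨PUnit.unit, equiv3 k X, fun u _ => rfl⟩, ?_⟩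
  rw [show (Finset.univ : Finset PUnit) = {PUnit.unit} from rfl,
    Finset.sum_singleton, multq3]

lemma count4 (k : ℕ) : IsRefinedCount k 0 1 (fun _ => 0) [] [1, 1] 1 := by
  refine ⟨PUnit, inferInstance, fun _ => rep4 k,
    fun X => ⟨PUnit.unit, equiv4 k X, fun u _ => rfl⟩, ?_⟩
  rw [show (Finset.univ : Finset PUnit) = {PUnit.unit} from rfl,
    Finset.sum_singleton, multq4]

lemma count6 (k : ℕ) (i : Fin k) :
    IsRefinedCount k 0 1 (fun j => if j = i then 1 else 0) [1] [] 1 := by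
  refine ⟨PUnit, inferInstance, fun _ => rep6 k i,
    fun X => ⟨PUnit.unit, equiv6 k i X, fun u _ => rfl⟩, ?_⟩
  rw [show (Finset.univ : Finset PUnit) = {PUnit.unit} from rfl,
    Finset.sum_singleton, multq6]

lemma count7 (k : ℕ) (i : Fin k) :
    IsRefinedCount k 0 1 (fun j => if j = i then 1 else 0) [] [1] 1 := by
  refine ⟨PUnit, inferInstance, fun _ => rep7 k i,
    fun X => ⟨PUnit.unit, equiv7 k i X, fun u _ => rfl⟩, ?_⟩
  rw [show (Finset.univ : Finset PUnit) = {PUnit.unit} from rfl,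
    Finset.sum_singleton, multq7]

end EqC
/-- For every `k ≥ 0` (with `i ∈ {1,…,k}` when `k ≥ 1`), the genus-0
refined floor diagram counts for degree-one classes in `X_k'` are:
`N_q^{(2),∅}(X_k',[L],0) = [2]_q/2`, `N_q^{(1,1),∅}(X_k',[L],0) = 1`,
`N_q^{(1),(1)}(X_k',[L],0) = 1`, `N_q^{∅,(1,1)}(X_k',[L],0) = 1`,
`N_q^{∅,(2)}(X_k',[L],0) = [2]_q`, `N_q^{(1),∅}(X_k',[L]−[E_i],0) = 1`,
`N_q^{∅,(1)}(X_k',[L]−[E_i],0) = 1`.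
(Here `[L]` corresponds to `a = 1`, all `bⱼ = 0`, and `[L]−[E_i]` to `a = 1`, `b_i = 1`,
`bⱼ = 0` for `j ≠ i`.) -/
theorem refined_counts_degree_one (k : ℕ) :
    IsRefinedCount k 0 1 (fun _ => 0) [2] [] (C (2⁻¹ : ℚ) * qInt 2) ∧
    IsRefinedCount k 0 1 (fun _ => 0) [1, 1] [] 1 ∧
    IsRefinedCount k 0 1 (fun _ => 0) [1] [1] 1 ∧
    IsRefinedCount k 0 1 (fun _ => 0) [] [1, 1] 1 ∧
    IsRefinedCount k 0 1 (fun _ => 0) [] [2] (qInt 2) ∧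
    ∀ i : Fin k,
      IsRefinedCount k 0 1 (fun j => if j = i then 1 else 0) [1] [] 1 ∧
      IsRefinedCount k 0 1 (fun j => if j = i then 1 else 0) [] [1] 1 := by
  exact ⟨count1 k, count2 k, count3 k, count4 k, count5 k,
    fun i => ⟨count6 k i, count7 k i⟩⟩
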